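/- arXiv:math/9808070 — 11 statements merged into one kernel-verified Lean document; each statement's English description precedes it below -/
import Mathlib

section
/- Let p, q : [0,1] → ℂ be C¹ closed curves (p(0)=p(1), q(0)=q(1)). Then the total oriented area swept out by the moving segment from p(t) to q(t), namely (1/2)∫₀¹ ⟨i·(q(t) − p(t)), p'(t) + q'(t)⟩ dt, equals A_q − A_p, where A_γ = (1/2)∫₀¹ ⟨i·γ(t), γ'(t)⟩ dt is the oriented area enclosed by the closed curve γ. -/
open intervalIntegral

/-- Real inner product on ℂ: ⟨z, w⟩ = Re(conj z · w). -/
noncomputable def cinner (z w : ℂ) : ℝ := ((starRingEnd ℂ) z * w).re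

lemma cinner_cont {f g : ℝ → ℂ} {s : Set ℝ} (hf : ContinuousOn f s)
    (hg : ContinuousOn g s) : ContinuousOn (fun t => cinner (f t) (g t)) s := by
  simp only [cinner]
  fun_prop

lemma hasDerivAt_cre {f : ℝ → ℂ} {f' : ℂ} {t : ℝ} (h : HasDerivAt f f' t) :
    HasDerivAt (fun t => (f t).re) f'.re t := by
  exact Complex.reCLM.hasFDerivAt.comp_hasDerivAt t h

lemma hasDerivAt_cim {f : ℝ → ℂ} {f' : ℂ} {t : ℝ} (h : HasDerivAt f f' t) :
    HasDerivAt (fun t => (f t).im) f'.im t := by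
  exact Complex.imCLM.hasFDerivAt.comp_hasDerivAt t h

lemma cinner_key (a b c d : ℂ) :
    cinner (Complex.I * (b - a)) (c + d)
      = (cinner (Complex.I * b) d - cinner (Complex.I * a) c)
        + (cinner (Complex.I * d) a + cinner (Complex.I * b) c) := by
  simp [cinner, Complex.mul_re, Complex.mul_im]
  ring

/-- The total oriented area swept out by the moving segment from `p t` to `q t`
along two C¹ closed curves equals `A_q − A_p`, where
`A_γ = (1/2) ∫₀¹ ⟨i·γ, γ'⟩`. -/
theorem swept_area_eq_area_difference
    (p q p' q' : ℝ → ℂ)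
    (hp : ∀ t ∈ Set.Icc (0:ℝ) 1, HasDerivAt p (p' t) t)
    (hq : ∀ t ∈ Set.Icc (0:ℝ) 1, HasDerivAt q (q' t) t)
    (hp' : ContinuousOn p' (Set.Icc 0 1))
    (hq' : ContinuousOn q' (Set.Icc 0 1))
    (hpc : p 0 = p 1) (hqc : q 0 = q 1) :
    (1/2) * ∫ t in (0:ℝ)..1, cinner (Complex.I * (q t - p t)) (p' t + q' t)
      = (1/2) * (∫ t in (0:ℝ)..1, cinner (Complex.I * q t) (q' t))
        - (1/2) * (∫ t in (0:ℝ)..1, cinner (Complex.I * p t) (p' t)) := by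
  have hI : Set.uIcc (0:ℝ) 1 = Set.Icc 0 1 := Set.uIcc_of_le zero_le_one
  have hcp : ContinuousOn p (Set.Icc 0 1) := fun t ht =>
    (hp t ht).continuousAt.continuousWithinAt
  have hcq : ContinuousOn q (Set.Icc 0 1) := fun t ht =>
    (hq t ht).continuousAt.continuousWithinAt
  have hcI : ∀ {f : ℝ → ℂ}, ContinuousOn f (Set.Icc 0 1) →
      ContinuousOn (fun t => Complex.I * f t) (Set.Icc (0:ℝ) 1) := fun hf => by fun_prop
  -- F is the "exchange" term whose derivative absorbs the cross terms
  set F : ℝ → ℝ := fun t => cinner (Complex.I * q t) (p t) with hFdef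
  set G : ℝ → ℝ := fun t =>
    cinner (Complex.I * q' t) (p t) + cinner (Complex.I * q t) (p' t) with hGdef
  have hFG : ∀ t ∈ Set.Icc (0:ℝ) 1, HasDerivAt F (G t) t := by
    intro t ht
    have h1 :
        HasDerivAt (fun t => -((q t).im * (p t).re) + (q t).re * (p t).im)
          (-(((q' t).im * (p t).re) + (q t).im * (p' t).re)
            + ((q' t).re * (p t).im + (q t).re * (p' t).im)) t := by
      exact (((hasDerivAt_cim (hq t ht)).mul (hasDerivAt_cre (hp t ht))).neg).add
        ((hasDerivAt_cre (hq t ht)).mul (hasDerivAt_cim (hp t ht)))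
    have hF : F = fun t => -((q t).im * (p t).re) + (q t).re * (p t).im := by
      funext t
      simp [hFdef, cinner, Complex.mul_re, Complex.mul_im]
      ring
    rw [hF]
    convert h1 using 1
    simp [hGdef, cinner, Complex.mul_re, Complex.mul_im]
    ring
  -- integral of G vanishes by closedness
  have hGcont : ContinuousOn G (Set.Icc 0 1) :=
    (cinner_cont (hcI hq') hcp).add (cinner_cont (hcI hcq) hp')
  have hGint : IntervalIntegrable G MeasureTheory.volume 0 1 :=
    (hGcont.mono hI.le).intervalIntegrable
  have hGzero : (∫ t in (0:ℝ)..1, G t) = 0 := by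
    rw [integral_eq_sub_of_hasDerivAt (fun t ht => hFG t (hI ▸ ht)) hGint]
    simp [hFdef, hpc, hqc]
  -- integrability of the pieces
  have hAint : IntervalIntegrable (fun t => cinner (Complex.I * q t) (q' t))
      MeasureTheory.volume 0 1 :=
    ((cinner_cont (hcI hcq) hq').mono hI.le).intervalIntegrable
  have hBint : IntervalIntegrable (fun t => cinner (Complex.I * p t) (p' t))
      MeasureTheory.volume 0 1 :=
    ((cinner_cont (hcI hcp) hp').mono hI.le).intervalIntegrable
  have hsplit :
      (∫ t in (0:ℝ)..1, cinner (Complex.I * (q t - p t)) (p' t + q' t))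
        = (∫ t in (0:ℝ)..1, cinner (Complex.I * q t) (q' t))
          - (∫ t in (0:ℝ)..1, cinner (Complex.I * p t) (p' t)) := by
    have : (∫ t in (0:ℝ)..1, cinner (Complex.I * (q t - p t)) (p' t + q' t))
        = ∫ t in (0:ℝ)..1,
            ((cinner (Complex.I * q t) (q' t) - cinner (Complex.I * p t) (p' t)) + G t) := by
      apply integral_congr
      intro t _
      exact cinner_key (p t) (q t) (p' t) (q' t)
    rw [this, integral_add ((hAint.sub hBint)) hGint,
      integral_sub hAint hBint, hGzero, add_zero]
  rw [hsplit]
  ring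
end

section
/- Let R > ℓ > 0, set r = √(R² − ℓ²) and α = arcsin(ℓ/R), and define p(t) = r·exp(it) and q(t) = R·exp(i(t+α)). Then for all t ∈ ℝ: |q(t) − p(t)| = ℓ and p'(t) = (r/ℓ)·(q(t) − p(t)). Thus the circle of radius √(R² − ℓ²) is a closed tractrix of the circle of radius R: when the tracer point q of a planimeter of length ℓ traverses the circle of radius R, the chisel point can traverse the concentric circle of radius √(R² − ℓ²), always moving tangentially to the rod. -/
/-- The circle of radius `√(R² − ℓ²)` is a closed tractrix of the circle of
radius `R > ℓ`: with `p(t) = r e^{it}` and `q(t) = R e^{i(t+α)}`,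
`r = √(R² − ℓ²)`, `α = arcsin(ℓ/R)`, the rod has length `ℓ` and the chisel
point `p` always moves parallel to the rod `q − p`. -/
theorem circle_tractrix_of_circle
    (R ℓ : ℝ) (hℓ : 0 < ℓ) (hR : ℓ < R)
    (r α : ℝ) (hr : r = Real.sqrt (R^2 - ℓ^2)) (hα : α = Real.arcsin (ℓ / R))
    (p q : ℝ → ℂ)
    (hp : p = fun t : ℝ => (r : ℂ) * Complex.exp (Complex.I * (t : ℂ)))
    (hq : q = fun t : ℝ => (R : ℂ) * Complex.exp (Complex.I * (t + α))) :
    ∀ t : ℝ,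
      ‖q t - p t‖ = ℓ ∧
      HasDerivAt p (((r / ℓ : ℝ) : ℂ) * (q t - p t)) t := by
  have hR0 : (0:ℝ) < R := hℓ.trans hR
  have hRne : (R:ℝ) ≠ 0 := ne_of_gt hR0
  have hℓne : (ℓ:ℝ) ≠ 0 := ne_of_gt hℓ
  have hRC : (R:ℂ) ≠ 0 := by exact_mod_cast hRne
  have hsin : Real.sin α = ℓ / R := by
    rw [hα, Real.sin_arcsin (by
        have : (0:ℝ) ≤ ℓ / R := div_nonneg hℓ.le hR0.le
        linarith)
      (by rw [div_le_one hR0]; exact hR.le)]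
  have hcos : Real.cos α = r / R := by
    rw [hα, Real.cos_arcsin, hr]
    have h1 : 1 - (ℓ/R)^2 = (R^2 - ℓ^2)/R^2 := by field_simp
    rw [h1, Real.sqrt_div (by nlinarith), Real.sqrt_sq hR0.le]
  have hexp : Complex.exp (Complex.I * (α:ℂ)) = (r/R : ℝ) + Complex.I * (ℓ/R : ℝ) := by
    rw [mul_comm, Complex.exp_mul_I, ← Complex.ofReal_cos, ← Complex.ofReal_sin, hcos, hsin]
    ring
  have key : ∀ s : ℝ, q s - p s = Complex.I * (ℓ:ℂ) * Complex.exp (Complex.I * (s:ℂ)) := by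
    intro s
    rw [hp, hq]
    simp only [Complex.ofReal_add, mul_add, Complex.exp_add, hexp]
    push_cast
    field_simp [hRC]
    ring
  intro t
  constructor
  · rw [key t]
    simp [Complex.norm_exp, abs_of_pos hℓ]
  · have h1 : HasDerivAt (fun z : ℂ => Complex.I * z) Complex.I (t:ℂ) := by
      simpa using (hasDerivAt_id ((t:ℝ):ℂ)).const_mul Complex.I
    have hd : HasDerivAt (fun z : ℂ => (r:ℂ) * Complex.exp (Complex.I * z))
        ((r:ℂ) * (Complex.exp (Complex.I * (t:ℂ)) * Complex.I)) (t:ℂ) :=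
      h1.cexp.const_mul _
    have hd' := hd.comp_ofReal
    have hv : ((r / ℓ : ℝ) : ℂ) * (q t - p t)
        = (r:ℂ) * (Complex.exp (Complex.I * (t:ℂ)) * Complex.I) := by
      rw [key t]
      have hℓC : (ℓ:ℂ) ≠ 0 := by exact_mod_cast hℓne
      push_cast
      field_simp [hℓC]
    rw [hv, hp]
    exact hd'
end

section
/- Let ℓ > 0, let v ∈ ℂ be nonzero, and let z₀ ∈ ℂ with |z₀| = 1. Set β = −v/(2ℓ) and ρ = |β| = |v|/(2ℓ), and define z(t) = (cosh(ρt)·z₀ + (β/ρ)·sinh(ρt)) / ((conj(β)/ρ)·sinh(ρt)·z₀ + cosh(ρt)). Then for all t ∈ ℝ: the denominator is nonzero, |z(t)| = 1, and ℓ·z'(t) = i·Im(conj(v)·z(t))·z(t). (Thus the evolution of the planimeter direction z = e^{iθ} when the tracer point moves in a straight line with constant velocity v, governed by ℓθ' = a sin θ − b cos θ for v = a + ib, is given by the Möbius action of a one-parameter subgroup of SU(1,1).) -/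
/-- Straight-line motion of the Prytz planimeter: the rod direction evolves by
the Möbius action of a one-parameter subgroup of SU(1,1). With `β = −v/(2ℓ)`,
`ρ = |v|/(2ℓ)`, the curve
`z(t) = (cosh(ρt) z₀ + (β/ρ) sinh(ρt)) / ((conj β/ρ) sinh(ρt) z₀ + cosh(ρt))`
stays on the unit circle and satisfies `ℓ z' = i Im(conj v · z) z`. -/
theorem planimeter_straight_line_motion
    (ℓ : ℝ) (hℓ : 0 < ℓ) (v : ℂ) (hv : v ≠ 0) (z₀ : ℂ) (hz₀ : ‖z₀‖ = 1)
    (β : ℂ) (hβ : β = -v / (2 * ℓ))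
    (ρ : ℝ) (hρ : ρ = ‖v‖ / (2 * ℓ))
    (z : ℝ → ℂ)
    (hz : z = fun t : ℝ =>
      ((Real.cosh (ρ * t) : ℂ) * z₀ + (β / (ρ : ℂ)) * (Real.sinh (ρ * t) : ℂ)) /
      (((starRingEnd ℂ) β / (ρ : ℂ)) * (Real.sinh (ρ * t) : ℂ) * z₀ + (Real.cosh (ρ * t) : ℂ))) :
    ∀ t : ℝ,
      ((starRingEnd ℂ) β / (ρ : ℂ)) * (Real.sinh (ρ * t) : ℂ) * z₀ + (Real.cosh (ρ * t) : ℂ) ≠ 0 ∧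
      ‖z t‖ = 1 ∧
      HasDerivAt z
        ((Complex.I * ((Complex.im ((starRingEnd ℂ) v * z t) : ℝ) : ℂ) * z t) / (ℓ : ℂ)) t := by
  intro t
  have hρ0 : 0 < ρ := by
    rw [hρ]; exact div_pos (norm_pos_iff.mpr hv) (by linarith)
  have hρc : (ρ : ℂ) ≠ 0 := by exact_mod_cast hρ0.ne'
  have hℓc : (ℓ : ℂ) ≠ 0 := by exact_mod_cast hℓ.ne'
  have habsβ : ‖β‖ = ρ := by
    rw [hβ, hρ, norm_div, norm_neg]
    congr 1
    rw [norm_mul, Complex.norm_two, Complex.norm_real, Real.norm_eq_abs, abs_of_pos hℓ]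
  -- notation
  set c : ℂ := (Real.cosh (ρ * t) : ℂ) with hc_def
  set s : ℂ := (Real.sinh (ρ * t) : ℂ) with hs_def
  set u : ℂ := β / (ρ : ℂ) with hu_def
  have hcs : c ^ 2 - s ^ 2 = 1 := by
    rw [hc_def, hs_def]
    exact_mod_cast congrArg (Complex.ofReal) (Real.cosh_sq_sub_sinh_sq (ρ * t))
  have habsu : ‖u‖ = 1 := by
    rw [hu_def, norm_div, habsβ, Complex.norm_real, Real.norm_eq_abs, abs_of_pos hρ0, div_self hρ0.ne']
  have huu : u * (starRingEnd ℂ) u = 1 := by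
    rw [Complex.mul_conj]; norm_cast; rw [Complex.normSq_eq_norm_sq, habsu]; norm_num
  have hz₀c : z₀ * (starRingEnd ℂ) z₀ = 1 := by
    rw [Complex.mul_conj]; norm_cast; rw [Complex.normSq_eq_norm_sq, hz₀]; norm_num
  have hcu : (starRingEnd ℂ) β / (ρ : ℂ) = (starRingEnd ℂ) u := by
    rw [hu_def, map_div₀, Complex.conj_ofReal]
  -- denominator ≠ 0
  have hsc : |Real.sinh (ρ * t)| < Real.cosh (ρ * t) := by
    have h1 := Real.cosh_sq (ρ * t)
    have h2 := Real.cosh_pos (ρ * t)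
    have h3 : |Real.sinh (ρ * t)| ^ 2 < Real.cosh (ρ * t) ^ 2 := by
      rw [sq_abs]; nlinarith
    nlinarith [abs_nonneg (Real.sinh (ρ * t))]
  have hDabs : ‖(starRingEnd ℂ) u * s * z₀‖ = |Real.sinh (ρ * t)| := by
    rw [norm_mul, norm_mul, hz₀, Complex.norm_conj]
    rw [habsu, hs_def, Complex.norm_real, Real.norm_eq_abs]
    ring
  have hDne : (starRingEnd ℂ) β / (ρ : ℂ) * s * z₀ + c ≠ 0 := by
    rw [hcu]
    intro h
    have heq : (starRingEnd ℂ) u * s * z₀ = -c := by linear_combination h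
    have := congrArg (‖·‖) heq
    rw [hDabs, norm_neg, hc_def, Complex.norm_real, Real.norm_eq_abs,
      abs_of_pos (Real.cosh_pos _)] at this
    exact absurd this (ne_of_lt hsc)
  have hc' : (starRingEnd ℂ) c = c := by rw [hc_def, Complex.conj_ofReal]
  have hs' : (starRingEnd ℂ) s = s := by rw [hs_def, Complex.conj_ofReal]
  have hDne2 : (starRingEnd ℂ) u * s * z₀ + c ≠ 0 := by rw [← hcu]; exact hDne
  have hzt : z t = (c * z₀ + u * s) / ((starRingEnd ℂ) u * s * z₀ + c) := by
    simp only [hz]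
    rw [hu_def, ← hcu, hc_def, hs_def]
  have hNDconj : (c * z₀ + u * s) * (starRingEnd ℂ) (c * z₀ + u * s)
      = ((starRingEnd ℂ) u * s * z₀ + c) * (starRingEnd ℂ) ((starRingEnd ℂ) u * s * z₀ + c) := by
    simp only [map_add, map_mul, Complex.conj_conj, hc', hs']
    linear_combination (c ^ 2 - s ^ 2) * hz₀c - s ^ 2 * (z₀ * (starRingEnd ℂ) z₀ - 1) * huu
  have habsND : ‖c * z₀ + u * s‖ = ‖(starRingEnd ℂ) u * s * z₀ + c‖ := by
    rw [Complex.mul_conj, Complex.mul_conj] at hNDconj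
    have h := Complex.ofReal_inj.mp hNDconj
    rw [Complex.norm_def, Complex.norm_def, h]
  have habsz : ‖z t‖ = 1 := by
    rw [hzt, norm_div, habsND, div_self (norm_ne_zero_iff.mpr hDne2)]
  refine ⟨hDne, habsz, ?_⟩
  -- derivative of the components
  have hmul : HasDerivAt (fun x : ℝ => ρ * x) ρ t := by
    simpa using (hasDerivAt_id t).const_mul ρ
  have hch : HasDerivAt (fun x : ℝ => Real.cosh (ρ * x)) (Real.sinh (ρ * t) * ρ) t :=
    (Real.hasDerivAt_cosh (ρ * t)).comp t hmul
  have hsh : HasDerivAt (fun x : ℝ => Real.sinh (ρ * x)) (Real.cosh (ρ * t) * ρ) t :=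
    (Real.hasDerivAt_sinh (ρ * t)).comp t hmul
  have hchC := hch.ofReal_comp
  have hshC := hsh.ofReal_comp
  have hN := (hchC.mul_const z₀).add (hshC.const_mul u)
  have hDd := ((hshC.const_mul ((starRingEnd ℂ) β / (ρ : ℂ))).mul_const z₀).add hchC
  have hDne3 : (starRingEnd ℂ) β / (ρ : ℂ) * ((Real.sinh (ρ * t) : ℝ) : ℂ) * z₀
      + ((Real.cosh (ρ * t) : ℝ) : ℂ) ≠ 0 := by
    rw [← hc_def, ← hs_def]; exact hDne
  have hq := hN.div hDd hDne3
  have h2 : HasDerivAt z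
      (((((Real.sinh (ρ * t) * ρ : ℝ) : ℂ) * z₀ + u * ((Real.cosh (ρ * t) * ρ : ℝ) : ℂ)) *
          ((starRingEnd ℂ) β / (ρ : ℂ) * ((Real.sinh (ρ * t) : ℝ) : ℂ) * z₀ +
            ((Real.cosh (ρ * t) : ℝ) : ℂ)) -
        (((Real.cosh (ρ * t) : ℝ) : ℂ) * z₀ + u * ((Real.sinh (ρ * t) : ℝ) : ℂ)) *
          ((starRingEnd ℂ) β / (ρ : ℂ) * ((Real.cosh (ρ * t) * ρ : ℝ) : ℂ) * z₀ +
            ((Real.sinh (ρ * t) * ρ : ℝ) : ℂ))) /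
      ((starRingEnd ℂ) β / (ρ : ℂ) * ((Real.sinh (ρ * t) : ℝ) : ℂ) * z₀ +
        ((Real.cosh (ρ * t) : ℝ) : ℂ)) ^ 2) t := by
    rw [hz]; exact hq
  -- algebraic facts
  have hβu : β = (ρ : ℂ) * u := by rw [hu_def]; field_simp
  have hvβ : v = -(2 * (ℓ : ℂ)) * β := by rw [hβ]; field_simp
  have hvu : v = -(2 * (ℓ : ℂ) * (ρ : ℂ)) * u := by rw [hvβ, hβu]; ring
  have hcv : (starRingEnd ℂ) v = -(2 * (ℓ : ℂ) * (ρ : ℂ)) * (starRingEnd ℂ) u := by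
    rw [hvu]
    simp [map_mul, Complex.conj_ofReal]
    exact Or.inl (Or.inl (Or.inl (by simp [Complex.ext_iff])))
  have hzz : (starRingEnd ℂ) (z t) * z t = 1 := by
    rw [← Complex.normSq_eq_conj_mul_self, Complex.normSq_eq_norm_sq, habsz]
    norm_num
  have h2I : (2 * Complex.I : ℂ) ≠ 0 := by simp [Complex.I_ne_zero]
  have him : ((((starRingEnd ℂ) v * z t).im : ℝ) : ℂ)
      = ((starRingEnd ℂ) v * z t - (starRingEnd ℂ) ((starRingEnd ℂ) v * z t)) / (2 * Complex.I) := by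
    rw [eq_div_iff h2I, Complex.sub_conj]; push_cast; ring
  have step2 : (ρ : ℂ) * (u - (starRingEnd ℂ) u * (z t) ^ 2)
      = Complex.I * ((((starRingEnd ℂ) v * z t).im : ℝ) : ℂ) * z t / (ℓ : ℂ) := by
    rw [him, map_mul, Complex.conj_conj]
    clear_value u c s
    field_simp
    linear_combination (-(z t) ^ 2) * hcv + v * hzz + hvu
  have hcast1 : ((Real.sinh (ρ * t) * ρ : ℝ) : ℂ) = s * (ρ : ℂ) := by
    rw [hs_def]; push_cast; ring
  have hcast2 : ((Real.cosh (ρ * t) * ρ : ℝ) : ℂ) = c * (ρ : ℂ) := by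
    rw [hc_def]; push_cast; ring
  have poly1 : (s * (ρ : ℂ) * z₀ + u * (c * (ρ : ℂ))) * ((starRingEnd ℂ) u * s * z₀ + c) -
      (c * z₀ + u * s) * ((starRingEnd ℂ) u * (c * (ρ : ℂ)) * z₀ + s * (ρ : ℂ))
      = (ρ : ℂ) * u * ((starRingEnd ℂ) u * s * z₀ + c) ^ 2
        - (ρ : ℂ) * (starRingEnd ℂ) u * (c * z₀ + u * s) ^ 2 := by
    linear_combination ((ρ : ℂ) * s ^ 2 * (u - (starRingEnd ℂ) u * z₀ ^ 2)) * huu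
  have key : ((((Real.sinh (ρ * t) * ρ : ℝ) : ℂ) * z₀ + u * ((Real.cosh (ρ * t) * ρ : ℝ) : ℂ)) *
          ((starRingEnd ℂ) β / (ρ : ℂ) * ((Real.sinh (ρ * t) : ℝ) : ℂ) * z₀
            + ((Real.cosh (ρ * t) : ℝ) : ℂ)) -
        (((Real.cosh (ρ * t) : ℝ) : ℂ) * z₀ + u * ((Real.sinh (ρ * t) : ℝ) : ℂ)) *
          ((starRingEnd ℂ) β / (ρ : ℂ) * ((Real.cosh (ρ * t) * ρ : ℝ) : ℂ) * z₀
            + ((Real.sinh (ρ * t) * ρ : ℝ) : ℂ))) /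
      ((starRingEnd ℂ) β / (ρ : ℂ) * ((Real.sinh (ρ * t) : ℝ) : ℂ) * z₀
        + ((Real.cosh (ρ * t) : ℝ) : ℂ)) ^ 2
      = Complex.I * ((((starRingEnd ℂ) v * z t).im : ℝ) : ℂ) * z t / (ℓ : ℂ) := by
    rw [hcast1, hcast2, ← hs_def, ← hc_def, hcu, ← step2, hzt]
    clear_value u c s
    field_simp
    have hD' : s * z₀ * (starRingEnd ℂ) u + c ≠ 0 := by convert hDne2 using 1; ring
    rw [eq_sub_iff_add_eq, ← add_div, div_eq_iff (pow_ne_zero 2 hD')]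
    linear_combination (s ^ 2 * (u - (starRingEnd ℂ) u * z₀ ^ 2)) * huu
  rw [key] at h2
  exact h2
end

section
/- Let ℓ > 0 and t, θ₀ ∈ ℝ, and set D = cosh(t/ℓ) − sinh(t/ℓ)·cos θ₀. Then D > 0 and (cosh(t/(2ℓ))·e^{iθ₀} − sinh(t/(2ℓ))) / (−sinh(t/(2ℓ))·e^{iθ₀} + cosh(t/(2ℓ))) = [(cosh(t/ℓ)·cos θ₀ − sinh(t/ℓ)) + i·sin θ₀] / D. In particular, for θ₀ = π/2 this equals −tanh(t/ℓ) + i·sech(t/ℓ), so the path t ↦ t + ℓ·(−tanh(t/ℓ) + i·sech(t/ℓ)) of the chisel point is the standard tractrix. -/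
/-- The Möbius action of `[[cosh(t/2ℓ), −sinh(t/2ℓ)], [−sinh(t/2ℓ), cosh(t/2ℓ)]]`
on `e^{iθ₀}` in explicit form; for `θ₀ = π/2` it gives the standard tractrix
direction `−tanh(t/ℓ) + i sech(t/ℓ)`. -/
theorem mobius_action_straight_line
    (ℓ : ℝ) (hℓ : 0 < ℓ) (t θ₀ : ℝ)
    (D : ℝ) (hD : D = Real.cosh (t / ℓ) - Real.sinh (t / ℓ) * Real.cos θ₀) :
    0 < D ∧
    ((Real.cosh (t / (2 * ℓ)) : ℂ) * Complex.exp (θ₀ * Complex.I)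
        - (Real.sinh (t / (2 * ℓ)) : ℂ)) /
      (-(Real.sinh (t / (2 * ℓ)) : ℂ) * Complex.exp (θ₀ * Complex.I)
        + (Real.cosh (t / (2 * ℓ)) : ℂ))
      = (((Real.cosh (t / ℓ) * Real.cos θ₀ - Real.sinh (t / ℓ) : ℝ) : ℂ)
          + Complex.I * ((Real.sin θ₀ : ℝ) : ℂ)) / (D : ℂ) ∧
    (θ₀ = Real.pi / 2 →
      ((Real.cosh (t / (2 * ℓ)) : ℂ) * Complex.exp (θ₀ * Complex.I)
          - (Real.sinh (t / (2 * ℓ)) : ℂ)) /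
        (-(Real.sinh (t / (2 * ℓ)) : ℂ) * Complex.exp (θ₀ * Complex.I)
          + (Real.cosh (t / (2 * ℓ)) : ℂ))
        = -(Real.tanh (t / ℓ) : ℂ) + Complex.I * ((Real.cosh (t / ℓ))⁻¹ : ℝ)) := by
  have hc1 : Real.cos θ₀ ≤ 1 := Real.cos_le_one _
  have hc2 : -1 ≤ Real.cos θ₀ := Real.neg_one_le_cos _
  have hDpos : 0 < D := by
    rw [hD]
    rcases le_or_gt 0 (Real.sinh (t / ℓ)) with hs | hs
    · have h1 : Real.sinh (t / ℓ) * Real.cos θ₀ ≤ Real.sinh (t / ℓ) * 1 :=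
        mul_le_mul_of_nonneg_left hc1 hs
      have := Real.cosh_sub_sinh (t / ℓ)
      have := Real.exp_pos (-(t / ℓ))
      linarith
    · have h1 : (0:ℝ) ≤ (-(Real.sinh (t / ℓ))) * (1 + Real.cos θ₀) :=
        mul_nonneg (by linarith) (by linarith)
      have := Real.cosh_add_sinh (t / ℓ)
      have := Real.exp_pos (t / ℓ)
      nlinarith
  have h2 : t / ℓ = 2 * (t / (2 * ℓ)) := by field_simp
  set a := Real.cosh (t / (2 * ℓ)) with ha
  set b := Real.sinh (t / (2 * ℓ)) with hb
  have pyth : a ^ 2 - b ^ 2 = 1 := Real.cosh_sq_sub_sinh_sq _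
  have hcosh : Real.cosh (t / ℓ) = a ^ 2 + b ^ 2 := by
    rw [h2, Real.cosh_two_mul]
  have hsinh : Real.sinh (t / ℓ) = 2 * b * a := by
    rw [h2, Real.sinh_two_mul]
  have hDC : (D : ℂ) ≠ 0 := by exact_mod_cast hDpos.ne'
  have hz : Complex.exp (θ₀ * Complex.I) =
      (Real.cos θ₀ : ℂ) + (Real.sin θ₀ : ℂ) * Complex.I := by
    rw [Complex.exp_mul_I, Complex.ofReal_cos, Complex.ofReal_sin]
  have hapos : 0 < a := Real.cosh_pos _
  have habs : |b| < a := by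
    nlinarith [sq_abs b, abs_nonneg b]
  have hden : (-(b : ℂ) * Complex.exp (θ₀ * Complex.I) + (a : ℂ)) ≠ 0 := by
    intro h
    have h' : (a : ℂ) = (b : ℂ) * Complex.exp (θ₀ * Complex.I) := by
      linear_combination h
    have := congrArg (‖·‖) h'
    simp only [norm_mul, Complex.norm_real, Real.norm_eq_abs,
      Complex.norm_exp_ofReal_mul_I, mul_one] at this
    rw [abs_of_pos hapos] at this
    exact absurd this (ne_of_gt habs)
  have hsincos : Real.sin θ₀ ^ 2 + Real.cos θ₀ ^ 2 = 1 := Real.sin_sq_add_cos_sq θ₀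
  have key : ((a : ℂ) * Complex.exp (θ₀ * Complex.I) - (b : ℂ)) /
      (-(b : ℂ) * Complex.exp (θ₀ * Complex.I) + (a : ℂ))
      = (((Real.cosh (t / ℓ) * Real.cos θ₀ - Real.sinh (t / ℓ) : ℝ) : ℂ)
          + Complex.I * ((Real.sin θ₀ : ℝ) : ℂ)) / (D : ℂ) := by
    rw [div_eq_div_iff hden hDC, hz, hD, hcosh, hsinh]
    have pc : ((Real.sin θ₀ : ℂ)) ^ 2 + ((Real.cos θ₀ : ℂ)) ^ 2 = 1 := by
      exact_mod_cast hsincos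
    have pyc : (a : ℂ) ^ 2 - (b : ℂ) ^ 2 = 1 := by exact_mod_cast pyth
    push_cast [-Complex.ofReal_cos, -Complex.ofReal_sin]
    linear_combination ((b : ℂ) * (1 - (Real.cos θ₀ : ℂ) ^ 2)
        + Complex.I * (Real.sin θ₀ : ℂ) * ((a : ℂ) - (b : ℂ) * (Real.cos θ₀ : ℂ))) * pyc
      - (b : ℂ) * pc + ((Real.sin θ₀ : ℂ)) ^ 2 * (b : ℂ) * Complex.I_sq
  refine ⟨hDpos, key, fun hθ => ?_⟩
  subst hθ
  rw [key, hD]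
  have hco : Real.cosh (t / ℓ) ≠ 0 := (Real.cosh_pos _).ne'
  have hcoC : (Real.cosh (t / ℓ) : ℂ) ≠ 0 := by exact_mod_cast hco
  rw [Real.cos_pi_div_two, Real.sin_pi_div_two, Real.tanh_eq_sinh_div_cosh]
  push_cast
  field_simp
  ring
end

section
/- Let a, c be positive reals and b, d ∈ ℂ with a² − |b|² = 1 and c² − |d|² = 1. Set M_X = [[a, b], [conj(b), a]], M_Y = [[c, d], [conj(d), c]], M_X⁻¹ = [[a, −b], [−conj(b), a]], M_Y⁻¹ = [[c, −d], [−conj(d), c]] (2×2 complex matrices), and let H = M_Y⁻¹ · M_X⁻¹ · M_Y · M_X. Then trace(H) = 2 − 4·(Im(conj(b)·d))². -/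
open Matrix

/-- Trace of the parallelogram holonomy `H = e^{−Y}e^{−X}e^{Y}e^{X}` in SU(1,1):
`tr H = 2 − 4 Im(conj b · d)²`. -/
theorem parallelogram_holonomy_trace
    (a c : ℝ) (ha : 0 < a) (hc : 0 < c) (b d : ℂ)
    (hab : a ^ 2 - ‖b‖ ^ 2 = 1)
    (hcd : c ^ 2 - ‖d‖ ^ 2 = 1)
    (MX MY MXinv MYinv H : Matrix (Fin 2) (Fin 2) ℂ)
    (hMX : MX = !![(a : ℂ), b; (starRingEnd ℂ) b, (a : ℂ)])
    (hMY : MY = !![(c : ℂ), d; (starRingEnd ℂ) d, (c : ℂ)])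
    (hMXinv : MXinv = !![(a : ℂ), -b; -(starRingEnd ℂ) b, (a : ℂ)])
    (hMYinv : MYinv = !![(c : ℂ), -d; -(starRingEnd ℂ) d, (c : ℂ)])
    (hH : H = MYinv * MXinv * MY * MX) :
    H.trace = 2 - 4 * ((Complex.im ((starRingEnd ℂ) b * d) : ℝ) : ℂ) ^ 2 := by
  have hA : ((a : ℂ)) ^ 2 - (starRingEnd ℂ) b * b = 1 := by
    have h1 : ((Complex.normSq b : ℝ) : ℂ) = (starRingEnd ℂ) b * b :=
      Complex.normSq_eq_conj_mul_self
    have h2 : ((a ^ 2 - ‖b‖ ^ 2 : ℝ) : ℂ) = 1 := by rw [hab]; norm_num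
    rw [← Complex.sq_norm] at h1
    push_cast at h1 h2 ⊢
    linear_combination h2 + h1
  have hC : ((c : ℂ)) ^ 2 - (starRingEnd ℂ) d * d = 1 := by
    have h1 : ((Complex.normSq d : ℝ) : ℂ) = (starRingEnd ℂ) d * d :=
      Complex.normSq_eq_conj_mul_self
    have h2 : ((c ^ 2 - ‖d‖ ^ 2 : ℝ) : ℂ) = 1 := by rw [hcd]; norm_num
    rw [← Complex.sq_norm] at h1
    push_cast at h1 h2 ⊢
    linear_combination h2 + h1
  have hIm : ((Complex.im ((starRingEnd ℂ) b * d) : ℝ) : ℂ) * (2 * Complex.I)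
      = (starRingEnd ℂ) b * d - b * (starRingEnd ℂ) d := by
    have h := Complex.sub_conj ((starRingEnd ℂ) b * d)
    rw [_root_.map_mul, Complex.conj_conj] at h
    push_cast at h
    linear_combination -h
  subst hMX hMY hMXinv hMYinv hH
  simp only [Matrix.mul_fin_two, Matrix.trace_fin_two_of]
  linear_combination (2 * ((c : ℂ)) ^ 2 - 2 * ((starRingEnd ℂ) d) * d) * hA + 2 * hC -
    (((Complex.im ((starRingEnd ℂ) b * d) : ℝ) : ℂ) * (2 * Complex.I) +
      (starRingEnd ℂ) b * d - b * (starRingEnd ℂ) d) * hIm +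
    (4 * ((Complex.im ((starRingEnd ℂ) b * d) : ℝ) : ℂ) ^ 2) * Complex.I_sq
end

section
/- Let a, c be positive reals and b, d ∈ ℂ with a² − |b|² = 1 and c² − |d|² = 1. Set M_X = [[a, b], [conj(b), a]], M_Y = [[c, d], [conj(d), c]], M_X⁻¹ = [[a, −b], [−conj(b), a]], M_Y⁻¹ = [[c, −d], [−conj(d), c]], and H = M_Y⁻¹ · M_X⁻¹ · M_Y · M_X. Then H = I + 2·Im(conj(b)·d)·[[i, 0], [0, −i]]·(M_Y · M_X), where I is the 2×2 identity matrix. -/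
open Matrix

set_option maxHeartbeats 1000000 in
/-- The parallelogram holonomy `H = e^{−Y}e^{−X}e^{Y}e^{X}` satisfies
`H = I + 2 Im(conj b · d) · [[i,0],[0,−i]] · (e^Y e^X)`. -/
theorem parallelogram_holonomy_formula
    (a c : ℝ) (ha : 0 < a) (hc : 0 < c) (b d : ℂ)
    (hab : a ^ 2 - ‖b‖ ^ 2 = 1)
    (hcd : c ^ 2 - ‖d‖ ^ 2 = 1)
    (MX MY MXinv MYinv H : Matrix (Fin 2) (Fin 2) ℂ)
    (hMX : MX = !![(a : ℂ), b; (starRingEnd ℂ) b, (a : ℂ)])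
    (hMY : MY = !![(c : ℂ), d; (starRingEnd ℂ) d, (c : ℂ)])
    (hMXinv : MXinv = !![(a : ℂ), -b; -(starRingEnd ℂ) b, (a : ℂ)])
    (hMYinv : MYinv = !![(c : ℂ), -d; -(starRingEnd ℂ) d, (c : ℂ)])
    (hH : H = MYinv * MXinv * MY * MX) :
    H = 1 + ((2 * Complex.im ((starRingEnd ℂ) b * d) : ℝ) : ℂ)
          • (!![Complex.I, 0; 0, -Complex.I] * (MY * MX)) := by
  have hb : b * (starRingEnd ℂ) b = (a : ℂ) ^ 2 - 1 := by
    rw [Complex.mul_conj, ← Complex.sq_norm]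
    norm_cast
    linarith
  have hd : d * (starRingEnd ℂ) d = (c : ℂ) ^ 2 - 1 := by
    rw [Complex.mul_conj, ← Complex.sq_norm]
    norm_cast
    linarith
  have him : ((2 * Complex.im ((starRingEnd ℂ) b * d) : ℝ) : ℂ)
      = -Complex.I * ((starRingEnd ℂ) b * d - b * (starRingEnd ℂ) d) := by
    have h := Complex.sub_conj ((starRingEnd ℂ) b * d)
    rw [_root_.map_mul, Complex.conj_conj] at h
    push_cast at h ⊢
    linear_combination Complex.I * h + (2 * (((starRingEnd ℂ) b * d).im : ℂ)) * Complex.I_sq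
  subst hMX hMY hMXinv hMYinv hH
  rw [him]
  set B := (starRingEnd ℂ) b with hB
  set D := (starRingEnd ℂ) d with hD
  ext i j
  fin_cases i <;> fin_cases j <;>
    simp [Matrix.mul_apply, Fin.sum_univ_two, Matrix.one_apply]
  · linear_combination (d * D - (c : ℂ) ^ 2) * hb - hd +
      (B * d * a * c + B ^ 2 * d ^ 2 - b * D * a * c - b * B * d * D) * Complex.I_sq
  · linear_combination (B * d ^ 2 * a - b * d * D * a + b * B * d * c - b ^ 2 * D * c)
      * Complex.I_sq
  · linear_combination (-(B * d * D * a) - B ^ 2 * d * c + b * D ^ 2 * a + b * B * D * c)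
      * Complex.I_sq
  · linear_combination (d * D - (c : ℂ) ^ 2) * hb - hd +
      (-(B * d * a * c) + b * D * a * c - b * B * d * D + b ^ 2 * D ^ 2) * Complex.I_sq
end

section
/- Let x, y > 0 and s ∈ (0, 1] with x·y·s ≥ π/4. Then sinh(x)·sinh(y)·s ≥ (cosh(√π) − 1)/2, with equality when x = y = √π/2 and s = 1; moreover (cosh(√π) − 1)/2 > 1. Consequently, if x·y·s ≥ π/4 then sinh(x)·sinh(y)·s > 1. -/
open Real Set

/-- `sinh r ≤ r * cosh r` for `r ≥ 0`. -/
lemma menzin_aux_sinh_le (r : ℝ) (hr : 0 ≤ r) : Real.sinh r ≤ r * Real.cosh r := by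
  have key : MonotoneOn (fun r : ℝ => r * Real.cosh r - Real.sinh r) (Ici 0) := by
    have hd : ∀ t : ℝ, HasDerivAt (fun r : ℝ => r * Real.cosh r - Real.sinh r)
        (t * Real.sinh t) t := by
      intro t
      have h1 : HasDerivAt (fun r : ℝ => r * Real.cosh r)
          (1 * Real.cosh t + t * Real.sinh t) t :=
        (hasDerivAt_id t).mul (Real.hasDerivAt_cosh t)
      have h2 := h1.sub (Real.hasDerivAt_sinh t)
      exact h2.congr_deriv (by ring)
    apply monotoneOn_of_deriv_nonneg (convex_Ici 0)
    · exact (Continuous.sub (continuous_id.mul Real.continuous_cosh)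
        Real.continuous_sinh).continuousOn
    · intro t _; exact ((hd t).differentiableAt).differentiableWithinAt
    · intro t ht
      rw [interior_Ici, mem_Ioi] at ht
      rw [(hd t).deriv]
      exact mul_nonneg ht.le (Real.sinh_pos_iff.2 ht).le
  have h0 := key (le_refl (0:ℝ)) (mem_Ici.2 hr) hr
  simpa using h0

/-- `r ↦ sinh r / r` is monotone on `(0, ∞)`. -/
lemma menzin_aux_mono : MonotoneOn (fun r : ℝ => Real.sinh r / r) (Ioi 0) := by
  have hd : ∀ t : ℝ, t ≠ 0 → HasDerivAt (fun r : ℝ => Real.sinh r / r)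
      ((Real.cosh t * t - Real.sinh t * 1) / t ^ 2) t := by
    intro t ht
    exact (Real.hasDerivAt_sinh t).div (hasDerivAt_id t) ht
  apply monotoneOn_of_deriv_nonneg (convex_Ioi 0)
  · apply ContinuousOn.div Real.continuous_sinh.continuousOn continuousOn_id
    intro t ht; exact ne_of_gt ht
  · intro t ht
    rw [interior_Ioi, mem_Ioi] at ht
    exact ((hd t ht.ne').differentiableAt).differentiableWithinAt
  · intro t ht
    rw [interior_Ioi, mem_Ioi] at ht
    rw [(hd t ht.ne').deriv]
    apply div_nonneg _ (sq_nonneg t)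
    have := menzin_aux_sinh_le t ht.le
    nlinarith

/-- Convexity of `t ↦ cosh √t` on `[0, ∞)`. -/
lemma menzin_aux_convex : ConvexOn ℝ (Ici 0) (fun t : ℝ => Real.cosh (Real.sqrt t)) := by
  have hd : ∀ t : ℝ, 0 < t → HasDerivAt (fun t : ℝ => Real.cosh (Real.sqrt t))
      (Real.sinh (Real.sqrt t) * (1 / (2 * Real.sqrt t))) t := by
    intro t ht
    exact (Real.hasDerivAt_sqrt ht.ne').cosh
  apply MonotoneOn.convexOn_of_deriv (convex_Ici 0)
  · exact (Real.continuous_cosh.comp Real.continuous_sqrt).continuousOn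
  · intro t ht
    rw [interior_Ici, mem_Ioi] at ht
    exact ((hd t ht).differentiableAt).differentiableWithinAt
  · intro a ha b hb hab
    rw [interior_Ici, mem_Ioi] at ha hb
    rw [(hd a ha).deriv, (hd b hb).deriv]
    have hsa : 0 < Real.sqrt a := Real.sqrt_pos.2 ha
    have hsb : 0 < Real.sqrt b := Real.sqrt_pos.2 hb
    have hmono := menzin_aux_mono (mem_Ioi.2 hsa) (mem_Ioi.2 hsb)
      (Real.sqrt_le_sqrt hab)
    simp only at hmono
    rw [div_le_div_iff₀ hsa hsb] at hmono
    rw [mul_one_div, mul_one_div, div_le_div_iff₀ (by positivity) (by positivity)]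
    nlinarith

/-- Superadditivity: `cosh √a + cosh √b ≤ cosh √(a+b) + 1` for `a, b ≥ 0`. -/
lemma menzin_aux_super (a b : ℝ) (ha : 0 ≤ a) (hb : 0 ≤ b) :
    Real.cosh (Real.sqrt a) + Real.cosh (Real.sqrt b) ≤
      Real.cosh (Real.sqrt (a + b)) + 1 := by
  rcases eq_or_lt_of_le (by linarith : (0:ℝ) ≤ a + b) with hc | hc
  · have ha0 : a = 0 := by linarith
    have hb0 : b = 0 := by linarith
    simp [ha0, hb0, Real.sqrt_zero, Real.cosh_zero]
  · have hcne : a + b ≠ 0 := hc.ne'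
    have h1 := menzin_aux_convex.2
      (mem_Ici.2 hc.le) (mem_Ici.2 (le_refl (0:ℝ)))
      (show (0:ℝ) ≤ a / (a + b) from div_nonneg ha hc.le)
      (show (0:ℝ) ≤ b / (a + b) from div_nonneg hb hc.le)
      (show a / (a + b) + b / (a + b) = 1 by
        rw [← add_div, div_self hcne])
    have h2 := menzin_aux_convex.2
      (mem_Ici.2 hc.le) (mem_Ici.2 (le_refl (0:ℝ)))
      (show (0:ℝ) ≤ b / (a + b) from div_nonneg hb hc.le)
      (show (0:ℝ) ≤ a / (a + b) from div_nonneg ha hc.le)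
      (show b / (a + b) + a / (a + b) = 1 by
        rw [← add_div, add_comm b a, div_self hcne])
    simp only [smul_eq_mul, mul_zero, add_zero, Real.sqrt_zero, Real.cosh_zero,
      mul_one] at h1 h2
    rw [show a / (a + b) * (a + b) = a by field_simp] at h1
    rw [show b / (a + b) * (a + b) = b by field_simp] at h2
    have hsum : a / (a + b) + b / (a + b) = 1 := by
      rw [← add_div, div_self hcne]
    have key : a / (a + b) * Real.cosh (Real.sqrt (a + b)) +
        b / (a + b) * Real.cosh (Real.sqrt (a + b)) = Real.cosh (Real.sqrt (a + b)) := by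
      rw [← add_mul, hsum, one_mul]
    linarith [h1, h2, hsum, key]

/-- Slope inequality: for `t ≥ 1`, `t * (cosh √π − 1) ≤ cosh √(π t) − 1`. -/
lemma menzin_aux_slope (t : ℝ) (ht : 1 ≤ t) :
    t * (Real.cosh (Real.sqrt Real.pi) - 1) ≤ Real.cosh (Real.sqrt (Real.pi * t)) - 1 := by
  have htpos : (0:ℝ) < t := lt_of_lt_of_le one_pos ht
  have hπ : (0:ℝ) < Real.pi := Real.pi_pos
  have h := menzin_aux_convex.2
    (show Real.pi * t ∈ Ici (0:ℝ) from mem_Ici.2 (by positivity))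
    (mem_Ici.2 (le_refl (0:ℝ)))
    (show (0:ℝ) ≤ 1 / t by positivity)
    (show (0:ℝ) ≤ 1 - 1 / t by rw [sub_nonneg]; rw [div_le_one htpos]; exact ht)
    (show 1 / t + (1 - 1 / t) = 1 by ring)
  simp only [smul_eq_mul, mul_zero, add_zero, Real.sqrt_zero, Real.cosh_zero,
    mul_one] at h
  rw [show 1 / t * (Real.pi * t) = Real.pi by field_simp] at h
  have h2 := mul_le_mul_of_nonneg_left h htpos.le
  have e1 : t * (1 / t * Real.cosh (Real.sqrt (Real.pi * t)) + (1 - 1 / t)) =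
      Real.cosh (Real.sqrt (Real.pi * t)) + t - 1 := by field_simp; ring
  rw [e1] at h2
  linarith

/-- Product lower bound: `sinh x * sinh y ≥ (cosh (2√(xy)) − 1)/2`. -/
lemma menzin_aux_prod (x y : ℝ) (hx : 0 < x) (hy : 0 < y) :
    (Real.cosh (2 * Real.sqrt (x * y)) - 1) / 2 ≤ Real.sinh x * Real.sinh y := by
  have hid : 2 * (Real.sinh x * Real.sinh y) = Real.cosh (x + y) - Real.cosh (x - y) := by
    rw [Real.cosh_add, Real.cosh_sub]; ring
  have h := menzin_aux_super ((x - y) ^ 2) (4 * (x * y)) (sq_nonneg _) (by positivity)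
  have e1 : Real.sqrt ((x - y) ^ 2) = |x - y| := Real.sqrt_sq_eq_abs _
  have e2 : Real.sqrt (4 * (x * y)) = 2 * Real.sqrt (x * y) := by
    rw [show (4:ℝ) * (x * y) = (2 * Real.sqrt (x * y)) ^ 2 by
      rw [mul_pow, Real.sq_sqrt (by positivity)]; ring]
    exact Real.sqrt_sq (by positivity)
  have e3 : Real.sqrt ((x - y) ^ 2 + 4 * (x * y)) = x + y := by
    rw [show (x - y) ^ 2 + 4 * (x * y) = (x + y) ^ 2 by ring]
    exact Real.sqrt_sq (by positivity)
  rw [e1, e2, e3, Real.cosh_abs] at h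
  linarith

/-- Numerical bound: `cosh √π > 3`. -/
lemma menzin_aux_num : (3:ℝ) < Real.cosh (Real.sqrt Real.pi) := by
  have hπ1 : (1.772:ℝ) ≤ Real.sqrt Real.pi := by
    rw [Real.le_sqrt (by norm_num) Real.pi_pos.le]
    nlinarith [Real.pi_gt_d6]
  have hπ2 : Real.sqrt Real.pi ≤ 2 := by
    rw [show (2:ℝ) = Real.sqrt 4 by
      rw [show (4:ℝ) = 2 ^ 2 by norm_num, Real.sqrt_sq (by norm_num)]]
    exact Real.sqrt_le_sqrt Real.pi_le_four
  -- lower bound for exp 1.772 = (exp 0.443)^4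
  have h1 : (1.5572:ℝ) ≤ Real.exp 0.443 := by
    have := Real.sum_le_exp_of_nonneg (by norm_num : (0:ℝ) ≤ 0.443) 5
    norm_num [Finset.sum_range_succ, Nat.factorial] at this
    linarith
  have hexp4 : Real.exp 1.772 = Real.exp 0.443 ^ 4 := by
    rw [← Real.exp_nat_mul]; norm_num
  have hlb : (5.87:ℝ) ≤ Real.exp 1.772 := by
    rw [hexp4]
    have h2 : (1.5572:ℝ) ^ 4 ≤ Real.exp 0.443 ^ 4 :=
      pow_le_pow_left₀ (by norm_num) h1 4
    nlinarith
  have hlbr : (5.87:ℝ) ≤ Real.exp (Real.sqrt Real.pi) :=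
    le_trans hlb (Real.exp_le_exp.2 hπ1)
  -- lower bound for exp (−√π) ≥ exp (−2) = 1 / (exp 1)^2 > 0.135
  have he1 : Real.exp 1 < 2.7182818286 := Real.exp_one_lt_d9
  have he2 : Real.exp 2 < 7.39 := by
    rw [show (2:ℝ) = 1 + 1 by norm_num, Real.exp_add]
    nlinarith [Real.exp_pos (1:ℝ)]
  have hneg : (0.135:ℝ) ≤ Real.exp (-Real.sqrt Real.pi) := by
    have h3 : Real.exp (-2) ≤ Real.exp (-Real.sqrt Real.pi) :=
      Real.exp_le_exp.2 (by linarith)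
    have h4 : (0.135:ℝ) ≤ Real.exp (-2) := by
      rw [Real.exp_neg]
      rw [le_inv_comm₀ (by norm_num) (Real.exp_pos 2)]
      linarith
    linarith
  rw [Real.cosh_eq]
  linarith

/-- The optimization at the heart of Menzin's conjecture for parallelograms:
if `x y s ≥ π/4` with `x, y > 0` and `s ∈ (0,1]`, then
`sinh x sinh y s ≥ (cosh √π − 1)/2 > 1`, with equality at
`x = y = √π/2`, `s = 1`. -/
theorem menzin_parallelogram_inequality
    (x y s : ℝ) (hx : 0 < x) (hy : 0 < y) (hs : s ∈ Set.Ioc (0:ℝ) 1)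
    (harea : x * y * s ≥ Real.pi / 4) :
    Real.sinh x * Real.sinh y * s ≥ (Real.cosh (Real.sqrt Real.pi) - 1) / 2 ∧
    (x = Real.sqrt Real.pi / 2 ∧ y = Real.sqrt Real.pi / 2 ∧ s = 1 →
      Real.sinh x * Real.sinh y * s = (Real.cosh (Real.sqrt Real.pi) - 1) / 2) ∧
    (Real.cosh (Real.sqrt Real.pi) - 1) / 2 > 1 ∧
    Real.sinh x * Real.sinh y * s > 1 := by
  obtain ⟨hs0, hs1⟩ := hs
  have hπ : (0:ℝ) < Real.pi := Real.pi_pos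
  -- main lower bound
  have hmain : Real.sinh x * Real.sinh y * s ≥ (Real.cosh (Real.sqrt Real.pi) - 1) / 2 := by
    have h1 := menzin_aux_prod x y hx hy
    -- √(π/s) ≤ 2√(xy)
    have h2 : Real.sqrt (Real.pi / s) ≤ 2 * Real.sqrt (x * y) := by
      rw [show 2 * Real.sqrt (x * y) = Real.sqrt (4 * (x * y)) by
        rw [show (4:ℝ) * (x * y) = (2 * Real.sqrt (x * y)) ^ 2 by
          rw [mul_pow, Real.sq_sqrt (by positivity)]; ring]
        rw [Real.sqrt_sq (by positivity)]]
      apply Real.sqrt_le_sqrt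
      rw [div_le_iff₀ hs0]
      nlinarith
    have h3 : Real.cosh (Real.sqrt (Real.pi / s)) ≤ Real.cosh (2 * Real.sqrt (x * y)) := by
      rw [Real.cosh_le_cosh]
      rw [abs_of_nonneg (Real.sqrt_nonneg _), abs_of_nonneg (by positivity)]
      exact h2
    have h4 := menzin_aux_slope (1 / s) (by rw [le_div_iff₀ hs0]; linarith)
    rw [show Real.pi * (1 / s) = Real.pi / s by field_simp] at h4
    -- combine
    have h5 : (1 / s) * (Real.cosh (Real.sqrt Real.pi) - 1) ≤
        Real.cosh (2 * Real.sqrt (x * y)) - 1 := by linarith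
    have h6 := mul_le_mul_of_nonneg_left h5 hs0.le
    have h7 : s * ((1 / s) * (Real.cosh (Real.sqrt Real.pi) - 1)) =
        Real.cosh (Real.sqrt Real.pi) - 1 := by field_simp
    rw [h7] at h6
    nlinarith [h1, h6]
  have hnum := menzin_aux_num
  refine ⟨hmain, ?_, by linarith, by linarith⟩
  rintro ⟨hxe, hye, hse⟩
  subst hxe hye hse
  have h1 := Real.cosh_two_mul (Real.sqrt Real.pi / 2)
  rw [show 2 * (Real.sqrt Real.pi / 2) = Real.sqrt Real.pi by ring] at h1
  have h2 := Real.cosh_sq (Real.sqrt Real.pi / 2)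
  nlinarith [h1, h2]
end

section
/- Let a, c be positive reals and b, d ∈ ℂ with a² − |b|² = 1, c² − |d|² = 1, and m := Im(conj(b)·d) > 1. Then: (i) ad + bc ≠ 0 and ac + Re(conj(b)·d) > 0; (ii) the two points z_± := −(ad + bc)·(ac + Re(conj(b)·d) ± i·√(m² − 1)) / |ad + bc|² satisfy |z_±| = 1; (iii) z_± solve the equation ((ac + conj(b)d)·z + (ad + bc)) = −z·((a·conj(d) + conj(b)c)·z + (ac + b·conj(d))), i.e. the Möbius transformation of M_Y·M_X maps z_± to −z_±; and (iv) z_± are fixed points of the Möbius transformation of H = M_Y⁻¹·M_X⁻¹·M_Y·M_X, i.e. (H₁₁ z_± + H₁₂)/(H₂₁ z_± + H₂₂) = z_±. Here M_X = [[a, b], [conj(b), a]], M_Y = [[c, d], [conj(d), c]], M_X⁻¹ = [[a, −b], [−conj(b), a]], M_Y⁻¹ = [[c, −d], [−conj(d), c]]. -/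
set_option maxHeartbeats 1000000

open Matrix

/-- Fixed points of the parallelogram holonomy: when `m = Im(conj b · d) > 1`,
the two points `z_± = −(ad+bc)(ac + Re(conj b · d) ± i√(m²−1))/|ad+bc|²` lie on
the unit circle, the Möbius map of `e^Y e^X` sends each to its negative, and
they are fixed by the Möbius map of `H = e^{−Y}e^{−X}e^{Y}e^{X}`. -/
theorem parallelogram_holonomy_fixed_points
    (a c : ℝ) (ha : 0 < a) (hc : 0 < c) (b d : ℂ)
    (hab : a ^ 2 - ‖b‖ ^ 2 = 1)
    (hcd : c ^ 2 - ‖d‖ ^ 2 = 1)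
    (m : ℝ) (hm : m = Complex.im ((starRingEnd ℂ) b * d)) (hm1 : 1 < m)
    (MX MY MXinv MYinv H : Matrix (Fin 2) (Fin 2) ℂ)
    (hMX : MX = !![(a : ℂ), b; (starRingEnd ℂ) b, (a : ℂ)])
    (hMY : MY = !![(c : ℂ), d; (starRingEnd ℂ) d, (c : ℂ)])
    (hMXinv : MXinv = !![(a : ℂ), -b; -(starRingEnd ℂ) b, (a : ℂ)])
    (hMYinv : MYinv = !![(c : ℂ), -d; -(starRingEnd ℂ) d, (c : ℂ)])
    (hH : H = MYinv * MXinv * MY * MX)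
    (zp zm : ℂ)
    (hzp : zp = -((a : ℂ) * d + b * (c : ℂ))
        * (((a * c : ℝ) : ℂ) + (((Complex.re ((starRingEnd ℂ) b * d)) : ℝ) : ℂ)
            + Complex.I * ((Real.sqrt (m ^ 2 - 1) : ℝ) : ℂ))
        / ((‖(a : ℂ) * d + b * (c : ℂ)‖ : ℝ) : ℂ) ^ 2)
    (hzm : zm = -((a : ℂ) * d + b * (c : ℂ))
        * (((a * c : ℝ) : ℂ) + (((Complex.re ((starRingEnd ℂ) b * d)) : ℝ) : ℂ)
            - Complex.I * ((Real.sqrt (m ^ 2 - 1) : ℝ) : ℂ))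
        / ((‖(a : ℂ) * d + b * (c : ℂ)‖ : ℝ) : ℂ) ^ 2) :
    ((a : ℂ) * d + b * (c : ℂ) ≠ 0 ∧ 0 < a * c + Complex.re ((starRingEnd ℂ) b * d)) ∧
    (‖zp‖ = 1 ∧ ‖zm‖ = 1) ∧
    (∀ z ∈ ({zp, zm} : Set ℂ),
      ((a : ℂ) * (c : ℂ) + (starRingEnd ℂ) b * d) * z + ((a : ℂ) * d + b * (c : ℂ))
        = -z * (((a : ℂ) * (starRingEnd ℂ) d + (starRingEnd ℂ) b * (c : ℂ)) * z
            + ((a : ℂ) * (c : ℂ) + b * (starRingEnd ℂ) d))) ∧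
    (∀ z ∈ ({zp, zm} : Set ℂ),
      (H 0 0 * z + H 0 1) / (H 1 0 * z + H 1 1) = z) := by
  have hm0 : (0:ℝ) < m ^ 2 - 1 := by nlinarith
  set R : ℝ := Complex.re ((starRingEnd ℂ) b * d) with hR
  set t : ℝ := Real.sqrt (m ^ 2 - 1) with htdef
  have ht0 : 0 < t := Real.sqrt_pos.mpr hm0
  have ht2 : t ^ 2 = m ^ 2 - 1 := Real.sq_sqrt hm0.le
  set s : ℝ := a * c + R with hs
  set u : ℂ := (a : ℂ) * d + b * (c : ℂ) with hu
  -- basic complex identities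
  have hbd : (starRingEnd ℂ) b * d = (R : ℂ) + (m : ℂ) * Complex.I := by
    rw [hm, hR]; exact (Complex.re_add_im _).symm
  have hdb : b * (starRingEnd ℂ) d = (R : ℂ) - (m : ℂ) * Complex.I := by
    have := congrArg (starRingEnd ℂ) hbd
    simpa [map_add, _root_.map_mul, Complex.conj_ofReal, Complex.conj_I, mul_comm,
      sub_eq_add_neg] using this
  have hcb : (starRingEnd ℂ) b * b = ((‖b‖ : ℝ) : ℂ) ^ 2 := by
    rw [← Complex.normSq_eq_conj_mul_self]; norm_cast; exact (Complex.sq_norm b).symm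
  have hdd : (starRingEnd ℂ) d * d = ((‖d‖ : ℝ) : ℂ) ^ 2 := by
    rw [← Complex.normSq_eq_conj_mul_self]; norm_cast; exact (Complex.sq_norm d).symm
  have habC : ((a : ℂ)) ^ 2 = 1 + ((‖b‖ : ℝ) : ℂ) ^ 2 := by
    have : (a:ℝ) ^ 2 = 1 + ‖b‖ ^ 2 := by linarith
    exact_mod_cast congrArg (Complex.ofReal) this
  have hcdC : ((c : ℂ)) ^ 2 = 1 + ((‖d‖ : ℝ) : ℂ) ^ 2 := by
    have : (c:ℝ) ^ 2 = 1 + ‖d‖ ^ 2 := by linarith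
    exact_mod_cast congrArg (Complex.ofReal) this
  have ht2C : ((t : ℝ) : ℂ) ^ 2 = ((m : ℝ) : ℂ) ^ 2 - 1 := by exact_mod_cast congrArg Complex.ofReal ht2
  have hsC : ((s : ℝ) : ℂ) = (a : ℂ) * (c : ℂ) + (R : ℂ) := by rw [hs]; push_cast; ring
  have hcu : (starRingEnd ℂ) u = (a : ℂ) * (starRingEnd ℂ) d + (starRingEnd ℂ) b * (c : ℂ) := by
    rw [hu]; simp [map_add, _root_.map_mul, Complex.conj_ofReal]
  -- |u|^2 = s^2 + t^2
  have huu : (starRingEnd ℂ) u * u = (s : ℂ) ^ 2 + (t : ℂ) ^ 2 := by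
    rw [hcu, hu, hsC]
    linear_combination ((a:ℂ)^2) * hdd + ((c:ℂ)^2) * hcb + ((a:ℂ)*(c:ℂ)) * hbd
      + ((a:ℂ)*(c:ℂ)) * hdb - ht2C
      + (-(((c:ℂ))^2 - 1 - ((‖d‖ :ℝ):ℂ)^2) - 1) * habC - hcdC
      + (-((‖d‖ :ℝ):ℂ)^2) * hcb + (-((starRingEnd ℂ) b * b)) * hdd
      + (b * (starRingEnd ℂ) d) * hbd + ((R:ℂ) + (m:ℂ)*Complex.I) * hdb
      - (m:ℂ)^2 * Complex.I_sq
  have hNpos : (0:ℝ) < s ^ 2 + t ^ 2 := by positivity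
  have hNC : ((‖u‖ : ℝ) : ℂ) ^ 2 = (s : ℂ) ^ 2 + (t : ℂ) ^ 2 := by
    rw [← Complex.ofReal_pow, Complex.sq_norm, Complex.normSq_eq_conj_mul_self, huu]
  have hNcast : (s : ℂ) ^ 2 + (t : ℂ) ^ 2 = ((s ^ 2 + t ^ 2 : ℝ) : ℂ) := by push_cast; ring
  have hNne : ((s : ℂ) ^ 2 + (t : ℂ) ^ 2) ≠ 0 := by
    rw [hNcast]; exact_mod_cast ne_of_gt hNpos
  have habs2 : ‖u‖ ^ 2 = s ^ 2 + t ^ 2 := by exact_mod_cast hNC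
  have hune : u ≠ 0 := by
    intro h; rw [h] at habs2; simp at habs2; nlinarith
  have hRle : |R| ≤ ‖b‖ * ‖d‖ := by
    rw [hR]
    calc |((starRingEnd ℂ) b * d).re| ≤ ‖(starRingEnd ℂ) b * d‖ :=
          Complex.abs_re_le_norm _
      _ = ‖b‖ * ‖d‖ := by
          rw [norm_mul, Complex.norm_conj]
  have hspos : 0 < s := by
    rw [hs]
    rcases abs_le.mp hRle with ⟨h1, h2⟩
    nlinarith [norm_nonneg b, norm_nonneg d, mul_pos ha hc]
  have hzp' : zp = -u * ((s:ℂ) + Complex.I * (t:ℂ)) / ((s:ℂ)^2 + (t:ℂ)^2) := by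
    rw [hzp, hNC]; push_cast [hs]; ring
  have hzm' : zm = -u * ((s:ℂ) - Complex.I * (t:ℂ)) / ((s:ℂ)^2 + (t:ℂ)^2) := by
    rw [hzm, hNC]; push_cast [hs]; ring
  have hwp : ((s:ℂ) + Complex.I * (t:ℂ))^2 - 2*(s:ℂ)*((s:ℂ) + Complex.I*(t:ℂ))
      + ((s:ℂ)^2 + (t:ℂ)^2) = 0 := by
    linear_combination (t:ℂ)^2 * Complex.I_sq
  have hwm : ((s:ℂ) - Complex.I * (t:ℂ))^2 - 2*(s:ℂ)*((s:ℂ) - Complex.I*(t:ℂ))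
      + ((s:ℂ)^2 + (t:ℂ)^2) = 0 := by
    linear_combination (t:ℂ)^2 * Complex.I_sq
  have hquad : ∀ z w : ℂ, w^2 - 2*(s:ℂ)*w + ((s:ℂ)^2 + (t:ℂ)^2) = 0 →
      z = -u * w / ((s:ℂ)^2 + (t:ℂ)^2) →
      (starRingEnd ℂ) u * z^2 + 2*(s:ℂ)*z + u = 0 := by
    intro z w hw hz
    have hzN : z * ((s:ℂ)^2 + (t:ℂ)^2) = -u * w := by
      rw [hz, div_mul_cancel₀ _ hNne]
    have key : ((starRingEnd ℂ) u * z^2 + 2*(s:ℂ)*z + u) * ((s:ℂ)^2 + (t:ℂ)^2)^2 = 0 := by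
      linear_combination ((starRingEnd ℂ) u * (z*((s:ℂ)^2 + (t:ℂ)^2) - u*w)
          + 2*(s:ℂ)*((s:ℂ)^2 + (t:ℂ)^2)) * hzN
        + (u * w^2) * huu + (u * ((s:ℂ)^2 + (t:ℂ)^2)) * hw
    exact (mul_eq_zero.mp key).resolve_right (pow_ne_zero 2 hNne)
  have hQp : (starRingEnd ℂ) u * zp^2 + 2*(s:ℂ)*zp + u = 0 := hquad zp _ hwp hzp'
  have hQm : (starRingEnd ℂ) u * zm^2 + 2*(s:ℂ)*zm + u = 0 := hquad zm _ hwm hzm'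
  -- matrix products
  have hN1 : MY * MX = !![(s:ℂ) + (m:ℂ)*Complex.I, u;
      (starRingEnd ℂ) u, (s:ℂ) - (m:ℂ)*Complex.I] := by
    rw [hMY, hMX]
    ext i j
    fin_cases i <;> fin_cases j <;>
      simp [Matrix.mul_apply, Fin.sum_univ_two]
    · linear_combination hbd - hsC
    · rw [hu]; ring
    · rw [hcu]; ring
    · linear_combination hdb - hsC
  have hN2 : MYinv * MXinv = !![(s:ℂ) + (m:ℂ)*Complex.I, -u;
      -(starRingEnd ℂ) u, (s:ℂ) - (m:ℂ)*Complex.I] := by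
    rw [hMYinv, hMXinv]
    ext i j
    fin_cases i <;> fin_cases j <;>
      simp [Matrix.mul_apply, Fin.sum_univ_two]
    · linear_combination hbd - hsC
    · rw [hu]; ring
    · rw [hcu]; ring
    · linear_combination hdb - hsC
  have hHm : H = !![((s:ℂ) + (m:ℂ)*Complex.I)^2 - ((s:ℂ)^2 + (t:ℂ)^2), 2*(m:ℂ)*Complex.I*u;
      -(2*(m:ℂ)*Complex.I)*(starRingEnd ℂ) u, ((s:ℂ) - (m:ℂ)*Complex.I)^2 - ((s:ℂ)^2 + (t:ℂ)^2)] := by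
    rw [hH, Matrix.mul_assoc (MYinv * MXinv) MY MX, hN1, hN2]
    ext i j
    fin_cases i <;> fin_cases j <;>
      simp [Matrix.mul_apply, Fin.sum_univ_two]
    · linear_combination -huu
    · ring
    · ring
    · linear_combination -huu
  have h00 : H 0 0 = ((s:ℂ) + (m:ℂ)*Complex.I)^2 - ((s:ℂ)^2 + (t:ℂ)^2) := by rw [hHm]; simp
  have h01 : H 0 1 = 2*(m:ℂ)*Complex.I*u := by rw [hHm]; simp
  have h10 : H 1 0 = -(2*(m:ℂ)*Complex.I)*(starRingEnd ℂ) u := by rw [hHm]; simp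
  have h11 : H 1 1 = ((s:ℂ) - (m:ℂ)*Complex.I)^2 - ((s:ℂ)^2 + (t:ℂ)^2) := by rw [hHm]; simp
  -- denominators
  have hzNp : zp * ((s:ℂ)^2 + (t:ℂ)^2) = -u * ((s:ℂ) + Complex.I*(t:ℂ)) := by
    rw [hzp', div_mul_cancel₀ _ hNne]
  have hzNm : zm * ((s:ℂ)^2 + (t:ℂ)^2) = -u * ((s:ℂ) - Complex.I*(t:ℂ)) := by
    rw [hzm', div_mul_cancel₀ _ hNne]
  have hDp : H 1 0 * zp + H 1 1 = ((1 - 2*m^2 - 2*m*t : ℝ) : ℂ) := by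
    have key : (H 1 0 * zp + H 1 1) * ((s:ℂ)^2 + (t:ℂ)^2)
        = ((1 - 2*m^2 - 2*m*t : ℝ) : ℂ) * ((s:ℂ)^2 + (t:ℂ)^2) := by
      rw [h10, h11]
      push_cast
      linear_combination (-(2*(m:ℂ)*Complex.I*(starRingEnd ℂ) u)) * hzNp
        + (2*(m:ℂ)*Complex.I*((s:ℂ) + Complex.I*(t:ℂ))) * huu
        + (((s:ℂ)^2 + (t:ℂ)^2)*(2*(m:ℂ)*(t:ℂ) + (m:ℂ)^2)) * Complex.I_sq
        - ((s:ℂ)^2 + (t:ℂ)^2) * ht2C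
    exact mul_right_cancel₀ hNne key
  have hDm : H 1 0 * zm + H 1 1 = ((1 - 2*m^2 + 2*m*t : ℝ) : ℂ) := by
    have key : (H 1 0 * zm + H 1 1) * ((s:ℂ)^2 + (t:ℂ)^2)
        = ((1 - 2*m^2 + 2*m*t : ℝ) : ℂ) * ((s:ℂ)^2 + (t:ℂ)^2) := by
      rw [h10, h11]
      push_cast
      linear_combination (-(2*(m:ℂ)*Complex.I*(starRingEnd ℂ) u)) * hzNm
        + (2*(m:ℂ)*Complex.I*((s:ℂ) - Complex.I*(t:ℂ))) * huu
        + (((s:ℂ)^2 + (t:ℂ)^2)*((m:ℂ)^2 - 2*(m:ℂ)*(t:ℂ))) * Complex.I_sq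
        - ((s:ℂ)^2 + (t:ℂ)^2) * ht2C
    exact mul_right_cancel₀ hNne key
  have htm : t < m := by nlinarith
  have hDnep : H 1 0 * zp + H 1 1 ≠ 0 := by
    rw [hDp]
    have : (1 - 2*m^2 - 2*m*t : ℝ) ≠ 0 := by nlinarith
    exact_mod_cast this
  have hDnem : H 1 0 * zm + H 1 1 ≠ 0 := by
    rw [hDm]
    have : (1 - 2*m^2 + 2*m*t : ℝ) ≠ 0 := by nlinarith [mul_pos (sub_pos.mpr htm) (sub_pos.mpr htm)]
    exact_mod_cast this
  -- abs values
  have habsw : ∀ w : ℂ, ‖w‖ ^ 2 = s^2 + t^2 →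
      ‖-u * w / ((s:ℂ)^2 + (t:ℂ)^2)‖ = 1 := by
    intro w hw
    have hNabs : ‖(s:ℂ)^2 + (t:ℂ)^2‖ = s^2 + t^2 := by
      rw [hNcast, Complex.norm_real, Real.norm_eq_abs, abs_of_pos hNpos]
    have h1 : ‖u‖ = Real.sqrt (s^2 + t^2) := by
      rw [← habs2, Real.sqrt_sq (norm_nonneg u)]
    have h2 : ‖w‖ = Real.sqrt (s^2 + t^2) := by
      rw [← hw, Real.sqrt_sq (norm_nonneg w)]
    rw [norm_div, norm_mul, hNabs, norm_neg, h1, h2,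
      Real.mul_self_sqrt hNpos.le, div_self (ne_of_gt hNpos)]
  have habsp : ‖zp‖ = 1 := by
    rw [hzp']
    refine habsw _ ?_
    rw [Complex.sq_norm, Complex.normSq_apply]
    simp
    ring
  have habsm : ‖zm‖ = 1 := by
    rw [hzm']
    refine habsw _ ?_
    rw [Complex.sq_norm, Complex.normSq_apply]
    simp
    ring
  refine ⟨⟨hune, hspos⟩, ⟨habsp, habsm⟩, ?_, ?_⟩
  · intro z hz
    simp only [Set.mem_insert_iff, Set.mem_singleton_iff] at hz
    rw [hbd, hdb, ← hcu]
    rcases hz with rfl | rfl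
    · linear_combination hQp - 2*z*hsC
    · linear_combination hQm - 2*z*hsC
  · intro z hz
    simp only [Set.mem_insert_iff, Set.mem_singleton_iff] at hz
    rcases hz with rfl | rfl
    · rw [div_eq_iff hDnep, h00, h01, h10, h11]
      linear_combination (2*(m:ℂ)*Complex.I) * hQp
    · rw [div_eq_iff hDnem, h00, h01, h10, h11]
      linear_combination (2*(m:ℂ)*Complex.I) * hQm
end

section
/- Let a, c be positive reals and b, d ∈ ℂ with a² − |b|² = 1, c² − |d|² = 1, and m := Im(conj(b)·d) > 1. Let H = M_Y⁻¹·M_X⁻¹·M_Y·M_X with M_X = [[a, b], [conj(b), a]], M_Y = [[c, d], [conj(d), c]], M_X⁻¹ = [[a, −b], [−conj(b), a]], M_Y⁻¹ = [[c, −d], [−conj(d), c]], let h(z) = (H₁₁ z + H₁₂)/(H₂₁ z + H₂₂), and let z_± = −(ad + bc)·(ac + Re(conj(b)·d) ± i·√(m² − 1)) / |ad + bc|² be its fixed points on the unit circle. Then the complex derivative satisfies h'(z_±) = (2m·(m ± √(m² − 1)) − 1)^{−2}, and 0 < h'(z₊) < 1 < h'(z₋); thus z₊ is an attracting fixed point and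 z₋ is a repelling fixed point of h on the unit circle. -/
open Matrix

set_option maxHeartbeats 1600000 in
/-- Attracting and repelling fixed points of the parallelogram holonomy:
the Möbius map `h` of `H = e^{−Y}e^{−X}e^{Y}e^{X}` has derivative
`h'(z_±) = (2m(m ± √(m²−1)) − 1)^{−2}` at its fixed points, with
`0 < h'(z₊) < 1 < h'(z₋)`. -/
theorem parallelogram_holonomy_attracting_fixed_point
    (a c : ℝ) (ha : 0 < a) (hc : 0 < c) (b d : ℂ)
    (hab : a ^ 2 - ‖b‖ ^ 2 = 1)
    (hcd : c ^ 2 - ‖d‖ ^ 2 = 1)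
    (m : ℝ) (hm : m = Complex.im ((starRingEnd ℂ) b * d)) (hm1 : 1 < m)
    (MX MY MXinv MYinv H : Matrix (Fin 2) (Fin 2) ℂ)
    (hMX : MX = !![(a : ℂ), b; (starRingEnd ℂ) b, (a : ℂ)])
    (hMY : MY = !![(c : ℂ), d; (starRingEnd ℂ) d, (c : ℂ)])
    (hMXinv : MXinv = !![(a : ℂ), -b; -(starRingEnd ℂ) b, (a : ℂ)])
    (hMYinv : MYinv = !![(c : ℂ), -d; -(starRingEnd ℂ) d, (c : ℂ)])
    (hH : H = MYinv * MXinv * MY * MX)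
    (h : ℂ → ℂ) (hh : h = fun z => (H 0 0 * z + H 0 1) / (H 1 0 * z + H 1 1))
    (zp zm : ℂ)
    (hzp : zp = -((a : ℂ) * d + b * (c : ℂ))
        * (((a * c : ℝ) : ℂ) + (((Complex.re ((starRingEnd ℂ) b * d)) : ℝ) : ℂ)
            + Complex.I * ((Real.sqrt (m ^ 2 - 1) : ℝ) : ℂ))
        / ((‖(a : ℂ) * d + b * (c : ℂ)‖ : ℝ) : ℂ) ^ 2)
    (hzm : zm = -((a : ℂ) * d + b * (c : ℂ))
        * (((a * c : ℝ) : ℂ) + (((Complex.re ((starRingEnd ℂ) b * d)) : ℝ) : ℂ)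
            - Complex.I * ((Real.sqrt (m ^ 2 - 1) : ℝ) : ℂ))
        / ((‖(a : ℂ) * d + b * (c : ℂ)‖ : ℝ) : ℂ) ^ 2) :
    deriv h zp
      = ((((2 * m * (m + Real.sqrt (m ^ 2 - 1)) - 1) ^ 2)⁻¹ : ℝ) : ℂ) ∧
    deriv h zm
      = ((((2 * m * (m - Real.sqrt (m ^ 2 - 1)) - 1) ^ 2)⁻¹ : ℝ) : ℂ) ∧
    0 < ((2 * m * (m + Real.sqrt (m ^ 2 - 1)) - 1) ^ 2)⁻¹ ∧
    ((2 * m * (m + Real.sqrt (m ^ 2 - 1)) - 1) ^ 2)⁻¹ < 1 ∧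
    1 < ((2 * m * (m - Real.sqrt (m ^ 2 - 1)) - 1) ^ 2)⁻¹ := by

  obtain ⟨b1, b2, rfl⟩ : ∃ x y : ℝ, b = (x:ℂ) + (y:ℂ) * Complex.I :=
    ⟨b.re, b.im, (Complex.re_add_im b).symm⟩
  obtain ⟨d1, d2, rfl⟩ : ∃ x y : ℝ, d = (x:ℂ) + (y:ℂ) * Complex.I :=
    ⟨d.re, d.im, (Complex.re_add_im d).symm⟩
  set s : ℝ := Real.sqrt (m^2 - 1) with hs
  have hmr : m = b1 * d2 - b2 * d1 := by
    rw [hm]; simp [Complex.mul_im]; try ring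
  have hrr : Complex.re ((starRingEnd ℂ) ((b1:ℂ)+(b2:ℂ)*Complex.I) * ((d1:ℂ)+(d2:ℂ)*Complex.I))
      = b1*d1 + b2*d2 := by
    simp [Complex.mul_re]; try ring
  have ha2r : a^2 = 1 + b1^2 + b2^2 := by
    rw [Complex.sq_norm, Complex.normSq_apply] at hab
    simp at hab; nlinarith [hab]
  have hc2r : c^2 = 1 + d1^2 + d2^2 := by
    rw [Complex.sq_norm, Complex.normSq_apply] at hcd
    simp at hcd; nlinarith [hcd]
  have ha2 : (a:ℂ)^2 = 1 + (b1:ℂ)^2 + (b2:ℂ)^2 := by exact_mod_cast ha2r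
  have hc2 : (c:ℂ)^2 = 1 + (d1:ℂ)^2 + (d2:ℂ)^2 := by exact_mod_cast hc2r
  have hI : Complex.I^2 = -1 := Complex.I_sq
  have hm2 : (0:ℝ) ≤ m^2 - 1 := by nlinarith
  have hs2r : s^2 = m^2 - 1 := Real.sq_sqrt hm2
  have hsp : 0 < s := Real.sqrt_pos.mpr (by nlinarith)
  have hmrC : (m:ℂ) = (b1:ℂ)*(d2:ℂ) - (b2:ℂ)*(d1:ℂ) := by exact_mod_cast hmr
  -- nonvanishing of E = a d + b c
  have hE_ne : (a:ℂ) * ((d1:ℂ)+(d2:ℂ)*Complex.I) + ((b1:ℂ)+(b2:ℂ)*Complex.I) * (c:ℂ) ≠ 0 := by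
    intro h0
    have hre : a*d1 + b1*c = 0 := by
      have := congrArg Complex.re h0; simpa using this
    have him : a*d2 + b2*c = 0 := by
      have := congrArg Complex.im h0; simpa using this
    have hzero : a*m = 0 := by linear_combination a*hmr + b1*him - b2*hre
    nlinarith [mul_pos ha (lt_trans one_pos hm1)]
  have hEc_ne : ((a:ℂ)*((d1:ℂ) - (d2:ℂ)*Complex.I) + ((b1:ℂ) - (b2:ℂ)*Complex.I)*(c:ℂ)) ≠ 0 := by
    intro h0
    apply hE_ne
    have := congrArg (starRingEnd ℂ) h0
    simpa [map_add, _root_.map_mul, Complex.conj_ofReal, Complex.conj_I, mul_comm, sub_eq_add_neg,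
      neg_mul, mul_neg] using this
  have habsE : ((‖(a:ℂ) * ((d1:ℂ)+(d2:ℂ)*Complex.I) + ((b1:ℂ)+(b2:ℂ)*Complex.I) * (c:ℂ)‖ : ℝ) : ℂ)^2
      = ((a:ℂ) * ((d1:ℂ)+(d2:ℂ)*Complex.I) + ((b1:ℂ)+(b2:ℂ)*Complex.I) * (c:ℂ))
        * (starRingEnd ℂ) ((a:ℂ) * ((d1:ℂ)+(d2:ℂ)*Complex.I) + ((b1:ℂ)+(b2:ℂ)*Complex.I) * (c:ℂ)) := by
    rw [← Complex.ofReal_pow, Complex.sq_norm, Complex.mul_conj]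
  have hconjE : (starRingEnd ℂ) ((a:ℂ) * ((d1:ℂ)+(d2:ℂ)*Complex.I) + ((b1:ℂ)+(b2:ℂ)*Complex.I) * (c:ℂ))
      = ((a:ℂ)*((d1:ℂ) - (d2:ℂ)*Complex.I) + ((b1:ℂ) - (b2:ℂ)*Complex.I)*(c:ℂ)) := by
    simp [map_add, _root_.map_mul, Complex.conj_ofReal, Complex.conj_I]; ring
  have hzp' : zp = -((a:ℂ)*(c:ℂ) + ((b1:ℂ)*(d1:ℂ) + (b2:ℂ)*(d2:ℂ)) + Complex.I*(s:ℂ)) / ((a:ℂ)*((d1:ℂ) - (d2:ℂ)*Complex.I) + ((b1:ℂ) - (b2:ℂ)*Complex.I)*(c:ℂ)) := by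
    rw [hzp, hrr, habsE, hconjE]
    push_cast
    rw [div_eq_div_iff (by
      intro h0
      rcases mul_eq_zero.mp h0 with h1 | h1
      · exact hE_ne h1
      · exact hEc_ne h1) hEc_ne]
    ring
  have hzm' : zm = -((a:ℂ)*(c:ℂ) + ((b1:ℂ)*(d1:ℂ) + (b2:ℂ)*(d2:ℂ)) - Complex.I*(s:ℂ)) / ((a:ℂ)*((d1:ℂ) - (d2:ℂ)*Complex.I) + ((b1:ℂ) - (b2:ℂ)*Complex.I)*(c:ℂ)) := by
    rw [hzm, hrr, habsE, hconjE]
    push_cast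
    rw [div_eq_div_iff (by
      intro h0
      rcases mul_eq_zero.mp h0 with h1 | h1
      · exact hE_ne h1
      · exact hEc_ne h1) hEc_ne]
    ring
  -- entries of H
  have h00 : H 0 0 = ((b2:ℂ)^2*(d2:ℂ)^2*Complex.I^4 + 2*(b2:ℂ)^2*(d1:ℂ)*(d2:ℂ)*Complex.I^3 + (b2:ℂ)^2*(d1:ℂ)^2*Complex.I^2 - 2*(b1:ℂ)*(b2:ℂ)*(d2:ℂ)^2*Complex.I^3 - 4*(b1:ℂ)*(b2:ℂ)*(d1:ℂ)*(d2:ℂ)*Complex.I^2 - 2*(b1:ℂ)*(b2:ℂ)*(d1:ℂ)^2*Complex.I + (b1:ℂ)^2*(d2:ℂ)^2*Complex.I^2 + 2*(b1:ℂ)^2*(d1:ℂ)*(d2:ℂ)*Complex.I + (b1:ℂ)^2*(d1:ℂ)^2 + (c:ℂ)^2*(b2:ℂ)^2*Complex.I^2 - (c:ℂ)^2*(b1:ℂ)^2 - 2*(a:ℂ)*(c:ℂ)*(b2:ℂ)*(d1:ℂ)*Complex.I + 2*(a:ℂ)*(c:ℂ)*(b1:ℂ)*(d2:ℂ)*Complex.I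 + (a:ℂ)^2*(d2:ℂ)^2*Complex.I^2 - (a:ℂ)^2*(d1:ℂ)^2 + (a:ℂ)^2*(c:ℂ)^2) := by
    rw [hH, hMX, hMY, hMXinv, hMYinv]
    simp only [Matrix.mul_apply, Fin.sum_univ_two, Matrix.of_apply, Matrix.cons_val', Matrix.cons_val_zero, Matrix.cons_val_one, Matrix.head_cons, Matrix.empty_val', Matrix.cons_val_fin_one, Matrix.head_fin_const, map_add, _root_.map_mul, map_neg, Complex.conj_ofReal, Complex.conj_I]
    ring
  have h01 : H 0 1 = (- 2*(c:ℂ)*(b2:ℂ)^2*(d1:ℂ)*Complex.I^2 + 2*(c:ℂ)*(b1:ℂ)*(b2:ℂ)*(d2:ℂ)*Complex.I^2 - 2*(c:ℂ)*(b1:ℂ)*(b2:ℂ)*(d1:ℂ)*Complex.I + 2*(c:ℂ)*(b1:ℂ)^2*(d2:ℂ)*Complex.I - 2*(a:ℂ)*(b2:ℂ)*(d1:ℂ)*(d2:ℂ)*Complex.I^2 - 2*(a:ℂ)*(b2:ℂ)*(d1:ℂ)^2*Complex.I + 2*(a:ℂ)*(b1:ℂ)*(d2:ℂ)^2*Complex.I^2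 + 2*(a:ℂ)*(b1:ℂ)*(d1:ℂ)*(d2:ℂ)*Complex.I) := by
    rw [hH, hMX, hMY, hMXinv, hMYinv]
    simp only [Matrix.mul_apply, Fin.sum_univ_two, Matrix.of_apply, Matrix.cons_val', Matrix.cons_val_zero, Matrix.cons_val_one, Matrix.head_cons, Matrix.empty_val', Matrix.cons_val_fin_one, Matrix.head_fin_const, map_add, _root_.map_mul, map_neg, Complex.conj_ofReal, Complex.conj_I]
    ring
  have h10 : H 1 0 = (- 2*(c:ℂ)*(b2:ℂ)^2*(d1:ℂ)*Complex.I^2 + 2*(c:ℂ)*(b1:ℂ)*(b2:ℂ)*(d2:ℂ)*Complex.I^2 + 2*(c:ℂ)*(b1:ℂ)*(b2:ℂ)*(d1:ℂ)*Complex.I - 2*(c:ℂ)*(b1:ℂ)^2*(d2:ℂ)*Complex.I - 2*(a:ℂ)*(b2:ℂ)*(d1:ℂ)*(d2:ℂ)*Complex.I^2 + 2*(a:ℂ)*(b2:ℂ)*(d1:ℂ)^2*Complex.I + 2*(a:ℂ)*(b1:ℂ)*(d2:ℂ)^2*Complex.I^2 - 2*(a:ℂ)*(b1:ℂ)*(d1:ℂ)*(d2:ℂ)*Complex.I)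 := by
    rw [hH, hMX, hMY, hMXinv, hMYinv]
    simp only [Matrix.mul_apply, Fin.sum_univ_two, Matrix.of_apply, Matrix.cons_val', Matrix.cons_val_zero, Matrix.cons_val_one, Matrix.head_cons, Matrix.empty_val', Matrix.cons_val_fin_one, Matrix.head_fin_const, map_add, _root_.map_mul, map_neg, Complex.conj_ofReal, Complex.conj_I]
    ring
  have h11 : H 1 1 = ((b2:ℂ)^2*(d2:ℂ)^2*Complex.I^4 - 2*(b2:ℂ)^2*(d1:ℂ)*(d2:ℂ)*Complex.I^3 + (b2:ℂ)^2*(d1:ℂ)^2*Complex.I^2 + 2*(b1:ℂ)*(b2:ℂ)*(d2:ℂ)^2*Complex.I^3 - 4*(b1:ℂ)*(b2:ℂ)*(d1:ℂ)*(d2:ℂ)*Complex.I^2 + 2*(b1:ℂ)*(b2:ℂ)*(d1:ℂ)^2*Complex.I + (b1:ℂ)^2*(d2:ℂ)^2*Complex.I^2 - 2*(b1:ℂ)^2*(d1:ℂ)*(d2:ℂ)*Complex.I + (b1:ℂ)^2*(d1:ℂ)^2 + (c:ℂ)^2*(b2:ℂ)^2*Complex.I^2 - (c:ℂ)^2*(b1:ℂ)^2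 + 2*(a:ℂ)*(c:ℂ)*(b2:ℂ)*(d1:ℂ)*Complex.I - 2*(a:ℂ)*(c:ℂ)*(b1:ℂ)*(d2:ℂ)*Complex.I + (a:ℂ)^2*(d2:ℂ)^2*Complex.I^2 - (a:ℂ)^2*(d1:ℂ)^2 + (a:ℂ)^2*(c:ℂ)^2) := by
    rw [hH, hMX, hMY, hMXinv, hMYinv]
    simp only [Matrix.mul_apply, Fin.sum_univ_two, Matrix.of_apply, Matrix.cons_val', Matrix.cons_val_zero, Matrix.cons_val_one, Matrix.head_cons, Matrix.empty_val', Matrix.cons_val_fin_one, Matrix.head_fin_const, map_add, _root_.map_mul, map_neg, Complex.conj_ofReal, Complex.conj_I]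
    ring
  have hdet : H 0 0 * H 1 1 - H 0 1 * H 1 0 = 1 := by
    rw [h00, h01, h10, h11]
    linear_combination ((d2:ℂ)^4*Complex.I^4 - 2*(d1:ℂ)^2*(d2:ℂ)^2*Complex.I^2 + (d1:ℂ)^4 + (b2:ℂ)^2*(d2:ℂ)^4*Complex.I^4 + 2*(b2:ℂ)^2*(d2:ℂ)^4*Complex.I^6 - 2*(b2:ℂ)^2*(d1:ℂ)^2*(d2:ℂ)^2*Complex.I^2 - 4*(b2:ℂ)^2*(d1:ℂ)^2*(d2:ℂ)^2*Complex.I^4 + (b2:ℂ)^2*(d1:ℂ)^4 + 2*(b2:ℂ)^2*(d1:ℂ)^4*Complex.I^2 - (b1:ℂ)^2*(d2:ℂ)^4*Complex.I^4 + 2*(b1:ℂ)^2*(d1:ℂ)^2*(d2:ℂ)^2*Complex.I^2 - (b1:ℂ)^2*(d1:ℂ)^4 + 2*(c:ℂ)^2*(d2:ℂ)^2*Complex.I^2 - 2*(c:ℂ)^2*(d1:ℂ)^2 + 2*(c:ℂ)^2*(b2:ℂ)^2*(d2:ℂ)^2*Complex.I^2 + 4*(c:ℂ)^2*(b2:ℂ)^2*(d2:ℂ)^2*Complex.I^4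 - 2*(c:ℂ)^2*(b2:ℂ)^2*(d1:ℂ)^2 - 4*(c:ℂ)^2*(b2:ℂ)^2*(d1:ℂ)^2*Complex.I^2 - 2*(c:ℂ)^2*(b1:ℂ)^2*(d2:ℂ)^2*Complex.I^2 + 2*(c:ℂ)^2*(b1:ℂ)^2*(d1:ℂ)^2 + (c:ℂ)^4 + (c:ℂ)^4*(b2:ℂ)^2 + 2*(c:ℂ)^4*(b2:ℂ)^2*Complex.I^2 - (c:ℂ)^4*(b1:ℂ)^2 + (a:ℂ)^2*(d2:ℂ)^4*Complex.I^4 - 2*(a:ℂ)^2*(d1:ℂ)^2*(d2:ℂ)^2*Complex.I^2 + (a:ℂ)^2*(d1:ℂ)^4 + 2*(a:ℂ)^2*(c:ℂ)^2*(d2:ℂ)^2*Complex.I^2 - 2*(a:ℂ)^2*(c:ℂ)^2*(d1:ℂ)^2 + (a:ℂ)^2*(c:ℂ)^4) * ha2 + (1 + (d2:ℂ)^2 + 2*(d2:ℂ)^2*Complex.I^2 - (d1:ℂ)^2 + 2*(b2:ℂ)^2 + 2*(b2:ℂ)^2*Complex.I^2 + 2*(b2:ℂ)^2*(d2:ℂ)^2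 + 6*(b2:ℂ)^2*(d2:ℂ)^2*Complex.I^2 + 4*(b2:ℂ)^2*(d2:ℂ)^2*Complex.I^4 - 2*(b2:ℂ)^2*(d1:ℂ)^2 - 2*(b2:ℂ)^2*(d1:ℂ)^2*Complex.I^2 + (b2:ℂ)^4 + 2*(b2:ℂ)^4*Complex.I^2 + (b2:ℂ)^4*Complex.I^4 + (b2:ℂ)^4*(d2:ℂ)^2 + 4*(b2:ℂ)^4*(d2:ℂ)^2*Complex.I^2 + 5*(b2:ℂ)^4*(d2:ℂ)^2*Complex.I^4 + 2*(b2:ℂ)^4*(d2:ℂ)^2*Complex.I^6 - (b2:ℂ)^4*(d1:ℂ)^2 - 2*(b2:ℂ)^4*(d1:ℂ)^2*Complex.I^2 - (b2:ℂ)^4*(d1:ℂ)^2*Complex.I^4 + (c:ℂ)^2 + 2*(c:ℂ)^2*(b2:ℂ)^2 + 2*(c:ℂ)^2*(b2:ℂ)^2*Complex.I^2 + (c:ℂ)^2*(b2:ℂ)^4 + 2*(c:ℂ)^2*(b2:ℂ)^4*Complex.I^2 + (c:ℂ)^2*(b2:ℂ)^4*Complex.I^4) * hc2 + (2*(d2:ℂ)^2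 + (d2:ℂ)^4 + (d2:ℂ)^4*Complex.I^2 + 2*(b2:ℂ)^2 + 4*(b2:ℂ)^2*(d2:ℂ)^2 + 4*(b2:ℂ)^2*(d2:ℂ)^2*Complex.I^2 + 2*(b2:ℂ)^2*(d2:ℂ)^4 + 4*(b2:ℂ)^2*(d2:ℂ)^4*Complex.I^2 + 2*(b2:ℂ)^2*(d2:ℂ)^4*Complex.I^4 + (b2:ℂ)^4 + (b2:ℂ)^4*Complex.I^2 + 2*(b2:ℂ)^4*(d2:ℂ)^2 + 4*(b2:ℂ)^4*(d2:ℂ)^2*Complex.I^2 + 2*(b2:ℂ)^4*(d2:ℂ)^2*Complex.I^4 + (b2:ℂ)^4*(d2:ℂ)^4 + 3*(b2:ℂ)^4*(d2:ℂ)^4*Complex.I^2 + 3*(b2:ℂ)^4*(d2:ℂ)^4*Complex.I^4 + (b2:ℂ)^4*(d2:ℂ)^4*Complex.I^6) * hI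
  have hnum_p : ((b2:ℂ)^2*(d2:ℂ)^2*Complex.I^4 - 2*(b2:ℂ)^2*(d1:ℂ)*(d2:ℂ)*Complex.I^3 + (b2:ℂ)^2*(d1:ℂ)^2*Complex.I^2 + 2*(b1:ℂ)*(b2:ℂ)*(d2:ℂ)^2*Complex.I^3 - 4*(b1:ℂ)*(b2:ℂ)*(d1:ℂ)*(d2:ℂ)*Complex.I^2 + 2*(b1:ℂ)*(b2:ℂ)*(d1:ℂ)^2*Complex.I + (b1:ℂ)^2*(d2:ℂ)^2*Complex.I^2 - 2*(b1:ℂ)^2*(d1:ℂ)*(d2:ℂ)*Complex.I + (b1:ℂ)^2*(d1:ℂ)^2 + (c:ℂ)^2*(b2:ℂ)^2*Complex.I^2 - (c:ℂ)^2*(b1:ℂ)^2 + 2*(a:ℂ)*(c:ℂ)*(b2:ℂ)*(d1:ℂ)*Complex.I - 2*(a:ℂ)*(c:ℂ)*(b1:ℂ)*(d2:ℂ)*Complex.I + (a:ℂ)^2*(d2:ℂ)^2*Complex.I^2 - (a:ℂ)^2*(d1:ℂ)^2 + (a:ℂ)^2*(c:ℂ)^2) * ((a:ℂ)*((d1:ℂ)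 - (d2:ℂ)*Complex.I) + ((b1:ℂ) - (b2:ℂ)*Complex.I)*(c:ℂ)) - (- 2*(c:ℂ)*(b2:ℂ)^2*(d1:ℂ)*Complex.I^2 + 2*(c:ℂ)*(b1:ℂ)*(b2:ℂ)*(d2:ℂ)*Complex.I^2 + 2*(c:ℂ)*(b1:ℂ)*(b2:ℂ)*(d1:ℂ)*Complex.I - 2*(c:ℂ)*(b1:ℂ)^2*(d2:ℂ)*Complex.I - 2*(a:ℂ)*(b2:ℂ)*(d1:ℂ)*(d2:ℂ)*Complex.I^2 + 2*(a:ℂ)*(b2:ℂ)*(d1:ℂ)^2*Complex.I + 2*(a:ℂ)*(b1:ℂ)*(d2:ℂ)^2*Complex.I^2 - 2*(a:ℂ)*(b1:ℂ)*(d1:ℂ)*(d2:ℂ)*Complex.I) * ((a:ℂ)*(c:ℂ) + ((b1:ℂ)*(d1:ℂ) + (b2:ℂ)*(d2:ℂ)) + Complex.I*(s:ℂ)) = -(2*((b1:ℂ)*(d2:ℂ)-(b2:ℂ)*(d1:ℂ))*(((b1:ℂ)*(d2:ℂ)-(b2:ℂ)*(d1:ℂ)) + (s:ℂ)) - 1)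 * ((a:ℂ)*((d1:ℂ) - (d2:ℂ)*Complex.I) + ((b1:ℂ) - (b2:ℂ)*Complex.I)*(c:ℂ)) := by
    linear_combination (- (c:ℂ)*(b2:ℂ)*(d2:ℂ)^2*Complex.I^3 + (c:ℂ)*(b2:ℂ)*(d1:ℂ)^2*Complex.I + (c:ℂ)*(b1:ℂ)*(d2:ℂ)^2*Complex.I^2 - (c:ℂ)*(b1:ℂ)*(d1:ℂ)^2 - (c:ℂ)^3*(b2:ℂ)*Complex.I + (c:ℂ)^3*(b1:ℂ) - (a:ℂ)*(d2:ℂ)^3*Complex.I^3 + (a:ℂ)*(d1:ℂ)*(d2:ℂ)^2*Complex.I^2 + (a:ℂ)*(d1:ℂ)^2*(d2:ℂ)*Complex.I - (a:ℂ)*(d1:ℂ)^3 - (a:ℂ)*(c:ℂ)^2*(d2:ℂ)*Complex.I + (a:ℂ)*(c:ℂ)^2*(d1:ℂ)) * ha2 + (- (c:ℂ)*(b2:ℂ)*Complex.I - (c:ℂ)*(b2:ℂ)^3*Complex.I - (c:ℂ)*(b2:ℂ)^3*Complex.I^3 + (c:ℂ)*(b1:ℂ) + (c:ℂ)*(b1:ℂ)*(b2:ℂ)^2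 + (c:ℂ)*(b1:ℂ)*(b2:ℂ)^2*Complex.I^2 - (a:ℂ)*(d2:ℂ)*Complex.I + (a:ℂ)*(d1:ℂ) - (a:ℂ)*(b2:ℂ)^2*(d2:ℂ)*Complex.I - (a:ℂ)*(b2:ℂ)^2*(d2:ℂ)*Complex.I^3 + (a:ℂ)*(b2:ℂ)^2*(d1:ℂ) + (a:ℂ)*(b2:ℂ)^2*(d1:ℂ)*Complex.I^2) * hc2 + (- (c:ℂ)*(b2:ℂ)*(d2:ℂ)^2*Complex.I + 2*(c:ℂ)*(b2:ℂ)^2*(d1:ℂ)*(s:ℂ)*Complex.I - (c:ℂ)*(b2:ℂ)^3*Complex.I - (c:ℂ)*(b2:ℂ)^3*(d2:ℂ)^2*Complex.I - (c:ℂ)*(b2:ℂ)^3*(d2:ℂ)^2*Complex.I^3 + 2*(c:ℂ)*(b2:ℂ)^3*(d1:ℂ)*(d2:ℂ)*Complex.I^2 - 2*(c:ℂ)*(b2:ℂ)^3*(d1:ℂ)^2*Complex.I + (c:ℂ)*(b1:ℂ)*(d2:ℂ)^2 - 2*(c:ℂ)*(b1:ℂ)*(b2:ℂ)*(d2:ℂ)*(s:ℂ)*Complex.I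 - 2*(c:ℂ)*(b1:ℂ)*(b2:ℂ)*(d1:ℂ)*(s:ℂ) + (c:ℂ)*(b1:ℂ)*(b2:ℂ)^2 + (c:ℂ)*(b1:ℂ)*(b2:ℂ)^2*(d2:ℂ)^2 - (c:ℂ)*(b1:ℂ)*(b2:ℂ)^2*(d2:ℂ)^2*Complex.I^2 + 2*(c:ℂ)*(b1:ℂ)*(b2:ℂ)^2*(d1:ℂ)*(d2:ℂ)*Complex.I + 2*(c:ℂ)*(b1:ℂ)*(b2:ℂ)^2*(d1:ℂ)^2 + 2*(c:ℂ)*(b1:ℂ)^2*(d2:ℂ)*(s:ℂ) - 4*(c:ℂ)*(b1:ℂ)^2*(b2:ℂ)*(d1:ℂ)*(d2:ℂ) + 2*(c:ℂ)*(b1:ℂ)^3*(d2:ℂ)^2 - (a:ℂ)*(d2:ℂ)^3*Complex.I + (a:ℂ)*(d1:ℂ)*(d2:ℂ)^2 + 2*(a:ℂ)*(b2:ℂ)*(d1:ℂ)*(d2:ℂ)*(s:ℂ)*Complex.I - 2*(a:ℂ)*(b2:ℂ)*(d1:ℂ)^2*(s:ℂ) - (a:ℂ)*(b2:ℂ)^2*(d2:ℂ)*Complex.I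 - (a:ℂ)*(b2:ℂ)^2*(d2:ℂ)^3*Complex.I - (a:ℂ)*(b2:ℂ)^2*(d2:ℂ)^3*Complex.I^3 + (a:ℂ)*(b2:ℂ)^2*(d1:ℂ) + (a:ℂ)*(b2:ℂ)^2*(d1:ℂ)*(d2:ℂ)^2 + 3*(a:ℂ)*(b2:ℂ)^2*(d1:ℂ)*(d2:ℂ)^2*Complex.I^2 - 4*(a:ℂ)*(b2:ℂ)^2*(d1:ℂ)^2*(d2:ℂ)*Complex.I + 2*(a:ℂ)*(b2:ℂ)^2*(d1:ℂ)^3 - 2*(a:ℂ)*(b1:ℂ)*(d2:ℂ)^2*(s:ℂ)*Complex.I + 2*(a:ℂ)*(b1:ℂ)*(d1:ℂ)*(d2:ℂ)*(s:ℂ) - 2*(a:ℂ)*(b1:ℂ)*(b2:ℂ)*(d2:ℂ)^3*Complex.I^2 + 6*(a:ℂ)*(b1:ℂ)*(b2:ℂ)*(d1:ℂ)*(d2:ℂ)^2*Complex.I - 4*(a:ℂ)*(b1:ℂ)*(b2:ℂ)*(d1:ℂ)^2*(d2:ℂ) - 2*(a:ℂ)*(b1:ℂ)^2*(d2:ℂ)^3*Complex.I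 + 2*(a:ℂ)*(b1:ℂ)^2*(d1:ℂ)*(d2:ℂ)^2) * hI
  have hnum_m : ((b2:ℂ)^2*(d2:ℂ)^2*Complex.I^4 - 2*(b2:ℂ)^2*(d1:ℂ)*(d2:ℂ)*Complex.I^3 + (b2:ℂ)^2*(d1:ℂ)^2*Complex.I^2 + 2*(b1:ℂ)*(b2:ℂ)*(d2:ℂ)^2*Complex.I^3 - 4*(b1:ℂ)*(b2:ℂ)*(d1:ℂ)*(d2:ℂ)*Complex.I^2 + 2*(b1:ℂ)*(b2:ℂ)*(d1:ℂ)^2*Complex.I + (b1:ℂ)^2*(d2:ℂ)^2*Complex.I^2 - 2*(b1:ℂ)^2*(d1:ℂ)*(d2:ℂ)*Complex.I + (b1:ℂ)^2*(d1:ℂ)^2 + (c:ℂ)^2*(b2:ℂ)^2*Complex.I^2 - (c:ℂ)^2*(b1:ℂ)^2 + 2*(a:ℂ)*(c:ℂ)*(b2:ℂ)*(d1:ℂ)*Complex.I - 2*(a:ℂ)*(c:ℂ)*(b1:ℂ)*(d2:ℂ)*Complex.I + (a:ℂ)^2*(d2:ℂ)^2*Complex.I^2 - (a:ℂ)^2*(d1:ℂ)^2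 + (a:ℂ)^2*(c:ℂ)^2) * ((a:ℂ)*((d1:ℂ) - (d2:ℂ)*Complex.I) + ((b1:ℂ) - (b2:ℂ)*Complex.I)*(c:ℂ)) - (- 2*(c:ℂ)*(b2:ℂ)^2*(d1:ℂ)*Complex.I^2 + 2*(c:ℂ)*(b1:ℂ)*(b2:ℂ)*(d2:ℂ)*Complex.I^2 + 2*(c:ℂ)*(b1:ℂ)*(b2:ℂ)*(d1:ℂ)*Complex.I - 2*(c:ℂ)*(b1:ℂ)^2*(d2:ℂ)*Complex.I - 2*(a:ℂ)*(b2:ℂ)*(d1:ℂ)*(d2:ℂ)*Complex.I^2 + 2*(a:ℂ)*(b2:ℂ)*(d1:ℂ)^2*Complex.I + 2*(a:ℂ)*(b1:ℂ)*(d2:ℂ)^2*Complex.I^2 - 2*(a:ℂ)*(b1:ℂ)*(d1:ℂ)*(d2:ℂ)*Complex.I) * ((a:ℂ)*(c:ℂ) + ((b1:ℂ)*(d1:ℂ) + (b2:ℂ)*(d2:ℂ)) - Complex.I*(s:ℂ)) = -(2*((b1:ℂ)*(d2:ℂ)-(b2:ℂ)*(d1:ℂ))*(((b1:ℂ)*(d2:ℂ)-(b2:ℂ)*(d1:ℂ))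 - (s:ℂ)) - 1) * ((a:ℂ)*((d1:ℂ) - (d2:ℂ)*Complex.I) + ((b1:ℂ) - (b2:ℂ)*Complex.I)*(c:ℂ)) := by
    linear_combination (- (c:ℂ)*(b2:ℂ)*(d2:ℂ)^2*Complex.I^3 + (c:ℂ)*(b2:ℂ)*(d1:ℂ)^2*Complex.I + (c:ℂ)*(b1:ℂ)*(d2:ℂ)^2*Complex.I^2 - (c:ℂ)*(b1:ℂ)*(d1:ℂ)^2 - (c:ℂ)^3*(b2:ℂ)*Complex.I + (c:ℂ)^3*(b1:ℂ) - (a:ℂ)*(d2:ℂ)^3*Complex.I^3 + (a:ℂ)*(d1:ℂ)*(d2:ℂ)^2*Complex.I^2 + (a:ℂ)*(d1:ℂ)^2*(d2:ℂ)*Complex.I - (a:ℂ)*(d1:ℂ)^3 - (a:ℂ)*(c:ℂ)^2*(d2:ℂ)*Complex.I + (a:ℂ)*(c:ℂ)^2*(d1:ℂ)) * ha2 + (- (c:ℂ)*(b2:ℂ)*Complex.I - (c:ℂ)*(b2:ℂ)^3*Complex.I - (c:ℂ)*(b2:ℂ)^3*Complex.I^3 + (c:ℂ)*(b1:ℂ)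 + (c:ℂ)*(b1:ℂ)*(b2:ℂ)^2 + (c:ℂ)*(b1:ℂ)*(b2:ℂ)^2*Complex.I^2 - (a:ℂ)*(d2:ℂ)*Complex.I + (a:ℂ)*(d1:ℂ) - (a:ℂ)*(b2:ℂ)^2*(d2:ℂ)*Complex.I - (a:ℂ)*(b2:ℂ)^2*(d2:ℂ)*Complex.I^3 + (a:ℂ)*(b2:ℂ)^2*(d1:ℂ) + (a:ℂ)*(b2:ℂ)^2*(d1:ℂ)*Complex.I^2) * hc2 + (- (c:ℂ)*(b2:ℂ)*(d2:ℂ)^2*Complex.I - 2*(c:ℂ)*(b2:ℂ)^2*(d1:ℂ)*(s:ℂ)*Complex.I - (c:ℂ)*(b2:ℂ)^3*Complex.I - (c:ℂ)*(b2:ℂ)^3*(d2:ℂ)^2*Complex.I - (c:ℂ)*(b2:ℂ)^3*(d2:ℂ)^2*Complex.I^3 + 2*(c:ℂ)*(b2:ℂ)^3*(d1:ℂ)*(d2:ℂ)*Complex.I^2 - 2*(c:ℂ)*(b2:ℂ)^3*(d1:ℂ)^2*Complex.I + (c:ℂ)*(b1:ℂ)*(d2:ℂ)^2 + 2*(c:ℂ)*(b1:ℂ)*(b2:ℂ)*(d2:ℂ)*(s:ℂ)*Complex.I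 + 2*(c:ℂ)*(b1:ℂ)*(b2:ℂ)*(d1:ℂ)*(s:ℂ) + (c:ℂ)*(b1:ℂ)*(b2:ℂ)^2 + (c:ℂ)*(b1:ℂ)*(b2:ℂ)^2*(d2:ℂ)^2 - (c:ℂ)*(b1:ℂ)*(b2:ℂ)^2*(d2:ℂ)^2*Complex.I^2 + 2*(c:ℂ)*(b1:ℂ)*(b2:ℂ)^2*(d1:ℂ)*(d2:ℂ)*Complex.I + 2*(c:ℂ)*(b1:ℂ)*(b2:ℂ)^2*(d1:ℂ)^2 - 2*(c:ℂ)*(b1:ℂ)^2*(d2:ℂ)*(s:ℂ) - 4*(c:ℂ)*(b1:ℂ)^2*(b2:ℂ)*(d1:ℂ)*(d2:ℂ) + 2*(c:ℂ)*(b1:ℂ)^3*(d2:ℂ)^2 - (a:ℂ)*(d2:ℂ)^3*Complex.I + (a:ℂ)*(d1:ℂ)*(d2:ℂ)^2 - 2*(a:ℂ)*(b2:ℂ)*(d1:ℂ)*(d2:ℂ)*(s:ℂ)*Complex.I + 2*(a:ℂ)*(b2:ℂ)*(d1:ℂ)^2*(s:ℂ) - (a:ℂ)*(b2:ℂ)^2*(d2:ℂ)*Complex.I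 - (a:ℂ)*(b2:ℂ)^2*(d2:ℂ)^3*Complex.I - (a:ℂ)*(b2:ℂ)^2*(d2:ℂ)^3*Complex.I^3 + (a:ℂ)*(b2:ℂ)^2*(d1:ℂ) + (a:ℂ)*(b2:ℂ)^2*(d1:ℂ)*(d2:ℂ)^2 + 3*(a:ℂ)*(b2:ℂ)^2*(d1:ℂ)*(d2:ℂ)^2*Complex.I^2 - 4*(a:ℂ)*(b2:ℂ)^2*(d1:ℂ)^2*(d2:ℂ)*Complex.I + 2*(a:ℂ)*(b2:ℂ)^2*(d1:ℂ)^3 + 2*(a:ℂ)*(b1:ℂ)*(d2:ℂ)^2*(s:ℂ)*Complex.I - 2*(a:ℂ)*(b1:ℂ)*(d1:ℂ)*(d2:ℂ)*(s:ℂ) - 2*(a:ℂ)*(b1:ℂ)*(b2:ℂ)*(d2:ℂ)^3*Complex.I^2 + 6*(a:ℂ)*(b1:ℂ)*(b2:ℂ)*(d1:ℂ)*(d2:ℂ)^2*Complex.I - 4*(a:ℂ)*(b1:ℂ)*(b2:ℂ)*(d1:ℂ)^2*(d2:ℂ) - 2*(a:ℂ)*(b1:ℂ)^2*(d2:ℂ)^3*Complex.I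 + 2*(a:ℂ)*(b1:ℂ)^2*(d1:ℂ)*(d2:ℂ)^2) * hI
  have keyp : H 1 0 * zp + H 1 1 = -(((2*m*(m + s) - 1 : ℝ)) : ℂ) := by
    rw [h10, h11, hzp']
    have step : (- 2*(c:ℂ)*(b2:ℂ)^2*(d1:ℂ)*Complex.I^2 + 2*(c:ℂ)*(b1:ℂ)*(b2:ℂ)*(d2:ℂ)*Complex.I^2 + 2*(c:ℂ)*(b1:ℂ)*(b2:ℂ)*(d1:ℂ)*Complex.I - 2*(c:ℂ)*(b1:ℂ)^2*(d2:ℂ)*Complex.I - 2*(a:ℂ)*(b2:ℂ)*(d1:ℂ)*(d2:ℂ)*Complex.I^2 + 2*(a:ℂ)*(b2:ℂ)*(d1:ℂ)^2*Complex.I + 2*(a:ℂ)*(b1:ℂ)*(d2:ℂ)^2*Complex.I^2 - 2*(a:ℂ)*(b1:ℂ)*(d1:ℂ)*(d2:ℂ)*Complex.I) * (-((a:ℂ)*(c:ℂ) + ((b1:ℂ)*(d1:ℂ) + (b2:ℂ)*(d2:ℂ)) + Complex.I*(s:ℂ)) / ((a:ℂ)*((d1:ℂ) - (d2:ℂ)*Complex.I)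 + ((b1:ℂ) - (b2:ℂ)*Complex.I)*(c:ℂ))) + ((b2:ℂ)^2*(d2:ℂ)^2*Complex.I^4 - 2*(b2:ℂ)^2*(d1:ℂ)*(d2:ℂ)*Complex.I^3 + (b2:ℂ)^2*(d1:ℂ)^2*Complex.I^2 + 2*(b1:ℂ)*(b2:ℂ)*(d2:ℂ)^2*Complex.I^3 - 4*(b1:ℂ)*(b2:ℂ)*(d1:ℂ)*(d2:ℂ)*Complex.I^2 + 2*(b1:ℂ)*(b2:ℂ)*(d1:ℂ)^2*Complex.I + (b1:ℂ)^2*(d2:ℂ)^2*Complex.I^2 - 2*(b1:ℂ)^2*(d1:ℂ)*(d2:ℂ)*Complex.I + (b1:ℂ)^2*(d1:ℂ)^2 + (c:ℂ)^2*(b2:ℂ)^2*Complex.I^2 - (c:ℂ)^2*(b1:ℂ)^2 + 2*(a:ℂ)*(c:ℂ)*(b2:ℂ)*(d1:ℂ)*Complex.I - 2*(a:ℂ)*(c:ℂ)*(b1:ℂ)*(d2:ℂ)*Complex.I + (a:ℂ)^2*(d2:ℂ)^2*Complex.I^2 - (a:ℂ)^2*(d1:ℂ)^2 + (a:ℂ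)^2*(c:ℂ)^2)
        = (((b2:ℂ)^2*(d2:ℂ)^2*Complex.I^4 - 2*(b2:ℂ)^2*(d1:ℂ)*(d2:ℂ)*Complex.I^3 + (b2:ℂ)^2*(d1:ℂ)^2*Complex.I^2 + 2*(b1:ℂ)*(b2:ℂ)*(d2:ℂ)^2*Complex.I^3 - 4*(b1:ℂ)*(b2:ℂ)*(d1:ℂ)*(d2:ℂ)*Complex.I^2 + 2*(b1:ℂ)*(b2:ℂ)*(d1:ℂ)^2*Complex.I + (b1:ℂ)^2*(d2:ℂ)^2*Complex.I^2 - 2*(b1:ℂ)^2*(d1:ℂ)*(d2:ℂ)*Complex.I + (b1:ℂ)^2*(d1:ℂ)^2 + (c:ℂ)^2*(b2:ℂ)^2*Complex.I^2 - (c:ℂ)^2*(b1:ℂ)^2 + 2*(a:ℂ)*(c:ℂ)*(b2:ℂ)*(d1:ℂ)*Complex.I - 2*(a:ℂ)*(c:ℂ)*(b1:ℂ)*(d2:ℂ)*Complex.I + (a:ℂ)^2*(d2:ℂ)^2*Complex.I^2 - (a:ℂ)^2*(d1:ℂ)^2 + (a:ℂ)^2*(c:ℂ)^2) * ((a:ℂ)*((d1:ℂ)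 - (d2:ℂ)*Complex.I) + ((b1:ℂ) - (b2:ℂ)*Complex.I)*(c:ℂ)) - (- 2*(c:ℂ)*(b2:ℂ)^2*(d1:ℂ)*Complex.I^2 + 2*(c:ℂ)*(b1:ℂ)*(b2:ℂ)*(d2:ℂ)*Complex.I^2 + 2*(c:ℂ)*(b1:ℂ)*(b2:ℂ)*(d1:ℂ)*Complex.I - 2*(c:ℂ)*(b1:ℂ)^2*(d2:ℂ)*Complex.I - 2*(a:ℂ)*(b2:ℂ)*(d1:ℂ)*(d2:ℂ)*Complex.I^2 + 2*(a:ℂ)*(b2:ℂ)*(d1:ℂ)^2*Complex.I + 2*(a:ℂ)*(b1:ℂ)*(d2:ℂ)^2*Complex.I^2 - 2*(a:ℂ)*(b1:ℂ)*(d1:ℂ)*(d2:ℂ)*Complex.I) * ((a:ℂ)*(c:ℂ) + ((b1:ℂ)*(d1:ℂ) + (b2:ℂ)*(d2:ℂ)) + Complex.I*(s:ℂ))) / ((a:ℂ)*((d1:ℂ) - (d2:ℂ)*Complex.I) + ((b1:ℂ) - (b2:ℂ)*Complex.I)*(c:ℂ)) := by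
      rw [mul_div_assoc', div_add' _ _ _ hEc_ne]
      ring
    rw [step, hnum_p, neg_mul, neg_div, mul_div_cancel_right₀ _ hEc_ne]
    push_cast
    rw [hmrC]
  have keym : H 1 0 * zm + H 1 1 = -(((2*m*(m - s) - 1 : ℝ)) : ℂ) := by
    rw [h10, h11, hzm']
    have step : (- 2*(c:ℂ)*(b2:ℂ)^2*(d1:ℂ)*Complex.I^2 + 2*(c:ℂ)*(b1:ℂ)*(b2:ℂ)*(d2:ℂ)*Complex.I^2 + 2*(c:ℂ)*(b1:ℂ)*(b2:ℂ)*(d1:ℂ)*Complex.I - 2*(c:ℂ)*(b1:ℂ)^2*(d2:ℂ)*Complex.I - 2*(a:ℂ)*(b2:ℂ)*(d1:ℂ)*(d2:ℂ)*Complex.I^2 + 2*(a:ℂ)*(b2:ℂ)*(d1:ℂ)^2*Complex.I + 2*(a:ℂ)*(b1:ℂ)*(d2:ℂ)^2*Complex.I^2 - 2*(a:ℂ)*(b1:ℂ)*(d1:ℂ)*(d2:ℂ)*Complex.I) * (-((a:ℂ)*(c:ℂ) + ((b1:ℂ)*(d1:ℂ) + (b2:ℂ)*(d2:ℂ)) -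 Complex.I*(s:ℂ)) / ((a:ℂ)*((d1:ℂ) - (d2:ℂ)*Complex.I) + ((b1:ℂ) - (b2:ℂ)*Complex.I)*(c:ℂ))) + ((b2:ℂ)^2*(d2:ℂ)^2*Complex.I^4 - 2*(b2:ℂ)^2*(d1:ℂ)*(d2:ℂ)*Complex.I^3 + (b2:ℂ)^2*(d1:ℂ)^2*Complex.I^2 + 2*(b1:ℂ)*(b2:ℂ)*(d2:ℂ)^2*Complex.I^3 - 4*(b1:ℂ)*(b2:ℂ)*(d1:ℂ)*(d2:ℂ)*Complex.I^2 + 2*(b1:ℂ)*(b2:ℂ)*(d1:ℂ)^2*Complex.I + (b1:ℂ)^2*(d2:ℂ)^2*Complex.I^2 - 2*(b1:ℂ)^2*(d1:ℂ)*(d2:ℂ)*Complex.I + (b1:ℂ)^2*(d1:ℂ)^2 + (c:ℂ)^2*(b2:ℂ)^2*Complex.I^2 - (c:ℂ)^2*(b1:ℂ)^2 + 2*(a:ℂ)*(c:ℂ)*(b2:ℂ)*(d1:ℂ)*Complex.I - 2*(a:ℂ)*(c:ℂ)*(b1:ℂ)*(d2:ℂ)*Complex.I + (a:ℂ)^2*(d2:ℂ)^2*Complex.I^2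 - (a:ℂ)^2*(d1:ℂ)^2 + (a:ℂ)^2*(c:ℂ)^2)
        = (((b2:ℂ)^2*(d2:ℂ)^2*Complex.I^4 - 2*(b2:ℂ)^2*(d1:ℂ)*(d2:ℂ)*Complex.I^3 + (b2:ℂ)^2*(d1:ℂ)^2*Complex.I^2 + 2*(b1:ℂ)*(b2:ℂ)*(d2:ℂ)^2*Complex.I^3 - 4*(b1:ℂ)*(b2:ℂ)*(d1:ℂ)*(d2:ℂ)*Complex.I^2 + 2*(b1:ℂ)*(b2:ℂ)*(d1:ℂ)^2*Complex.I + (b1:ℂ)^2*(d2:ℂ)^2*Complex.I^2 - 2*(b1:ℂ)^2*(d1:ℂ)*(d2:ℂ)*Complex.I + (b1:ℂ)^2*(d1:ℂ)^2 + (c:ℂ)^2*(b2:ℂ)^2*Complex.I^2 - (c:ℂ)^2*(b1:ℂ)^2 + 2*(a:ℂ)*(c:ℂ)*(b2:ℂ)*(d1:ℂ)*Complex.I - 2*(a:ℂ)*(c:ℂ)*(b1:ℂ)*(d2:ℂ)*Complex.I + (a:ℂ)^2*(d2:ℂ)^2*Complex.I^2 - (a:ℂ)^2*(d1:ℂ)^2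 + (a:ℂ)^2*(c:ℂ)^2) * ((a:ℂ)*((d1:ℂ) - (d2:ℂ)*Complex.I) + ((b1:ℂ) - (b2:ℂ)*Complex.I)*(c:ℂ)) - (- 2*(c:ℂ)*(b2:ℂ)^2*(d1:ℂ)*Complex.I^2 + 2*(c:ℂ)*(b1:ℂ)*(b2:ℂ)*(d2:ℂ)*Complex.I^2 + 2*(c:ℂ)*(b1:ℂ)*(b2:ℂ)*(d1:ℂ)*Complex.I - 2*(c:ℂ)*(b1:ℂ)^2*(d2:ℂ)*Complex.I - 2*(a:ℂ)*(b2:ℂ)*(d1:ℂ)*(d2:ℂ)*Complex.I^2 + 2*(a:ℂ)*(b2:ℂ)*(d1:ℂ)^2*Complex.I + 2*(a:ℂ)*(b1:ℂ)*(d2:ℂ)^2*Complex.I^2 - 2*(a:ℂ)*(b1:ℂ)*(d1:ℂ)*(d2:ℂ)*Complex.I) * ((a:ℂ)*(c:ℂ) + ((b1:ℂ)*(d1:ℂ) + (b2:ℂ)*(d2:ℂ)) - Complex.I*(s:ℂ))) / ((a:ℂ)*((d1:ℂ) - (d2:ℂ)*Complex.I) + ((b1:ℂ) - (b2:ℂ)*Complex.I)*(c:ℂ))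 := by
      rw [mul_div_assoc', div_add' _ _ _ hEc_ne]
      ring
    rw [step, hnum_m, neg_mul, neg_div, mul_div_cancel_right₀ _ hEc_ne]
    push_cast
    rw [hmrC]
  -- positivity facts
  have htp : 1 < 2*m*(m + s) - 1 := by nlinarith
  have hprod : (2*m*(m + s) - 1) * (2*m*(m - s) - 1) = 1 := by
    linear_combination (-(4*m^2)) * hs2r
  have htm0 : 0 < 2*m*(m - s) - 1 := by nlinarith
  have htm1 : 2*m*(m - s) - 1 < 1 := by nlinarith
  have hdenp : H 1 0 * zp + H 1 1 ≠ 0 := by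
    rw [keyp]
    simp only [ne_eq, neg_eq_zero, Complex.ofReal_eq_zero]
    nlinarith
  have hdenm : H 1 0 * zm + H 1 1 ≠ 0 := by
    rw [keym]
    simp only [ne_eq, neg_eq_zero, Complex.ofReal_eq_zero]
    nlinarith
  have hderiv : ∀ z : ℂ, H 1 0 * z + H 1 1 ≠ 0 →
      deriv h z = (H 0 0 * H 1 1 - H 0 1 * H 1 0) / (H 1 0 * z + H 1 1)^2 := by
    intro z hz
    rw [hh]
    have h1 : HasDerivAt (fun w : ℂ => H 0 0 * w + H 0 1) (H 0 0) z := by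
      simpa using ((hasDerivAt_id z).const_mul (H 0 0)).add_const (H 0 1)
    have h2 : HasDerivAt (fun w : ℂ => H 1 0 * w + H 1 1) (H 1 0) z := by
      simpa using ((hasDerivAt_id z).const_mul (H 1 0)).add_const (H 1 1)
    have h3 := h1.div h2 hz
    rw [(show deriv (fun z => (H 0 0 * z + H 0 1) / (H 1 0 * z + H 1 1)) z = _ from h3.deriv)]
    ring
  refine ⟨?_, ?_, ?_, ?_, ?_⟩
  · rw [hderiv zp hdenp, hdet, keyp]
    have htpne : (2*m*(m + s) - 1 : ℝ) ≠ 0 := by nlinarith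
    rw [Complex.ofReal_inv, Complex.ofReal_pow]
    field_simp
  · rw [hderiv zm hdenm, hdet, keym]
    have htmne : (2*m*(m - s) - 1 : ℝ) ≠ 0 := by nlinarith
    rw [Complex.ofReal_inv, Complex.ofReal_pow]
    field_simp
  · positivity
  · apply inv_lt_one_of_one_lt₀
    nlinarith
  · rw [lt_inv_comm₀ (by norm_num) (by positivity)]
    nlinarith
end

section
/- Let a, c be positive reals and b, d ∈ ℂ with a² − |b|² = 1, c² − |d|² = 1, and m := Im(conj(b)·d) > 1, and let z_± = −(ad + bc)·(ac + Re(conj(b)·d) ± i·√(m² − 1)) / |ad + bc|². Then Im(−z₊·conj(b)) > 0 and Im(−z₋·conj(b)) > 0. (Geometrically: the fixed directions z_± of the parallelogram holonomy lie strictly on one side of the direction of −b, i.e. the chisel edge of the planimeter lies in the interior of the angle of the parallelogram at the base vertex.) -/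
theorem absT (A T : ℝ) (hA : 0 < A) (hQ : 0 < A^2 - T^2) : 0 < A + T ∧ 0 < A - T := by
  constructor <;> nlinarith [sq_nonneg (A+T), sq_nonneg (A-T)]

theorem core (a c m R S : ℝ) (ha : 1 ≤ a) (hc : 1 ≤ c) (hm1 : 1 < m)
    (hsq : R^2 + m^2 = (a^2-1)*(c^2-1)) (hS2 : S^2 = m^2-1) :
    0 < a*m*(a*c+R) + S*(a*R+c*(a^2-1)) ∧ 0 < a*m*(a*c+R) - S*(a*R+c*(a^2-1)) := by
  have h4 : a^2*(R^2+m^2) = a^2*((a^2-1)*(c^2-1)) := by rw [hsq]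
  have hP : 0 < c*(2*a^2-1) + 2*a*R := by
    by_contra h
    push_neg at h
    have h1 : 0 ≤ c*(2*a^2-1) := by nlinarith
    have h2 : c*(2*a^2-1) ≤ 2*a*(-R) := by linarith
    have h3 : (c*(2*a^2-1))^2 ≤ (2*a*(-R))^2 := by nlinarith
    nlinarith [h3, h4, sq_nonneg m, sq_nonneg a]
  have hQ : (a*m*(a*c+R))^2 - (S*(a*R+c*(a^2-1)))^2
      = m^2*c*(c*(2*a^2-1)+2*a*R) + (c*(a^2-1)+a*R)^2 := by
    nlinarith [hS2]
  have h5 : 0 < m^2*c*(c*(2*a^2-1)+2*a*R) :=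
    mul_pos (mul_pos (pow_pos (by linarith : (0:ℝ) < m) 2) (by linarith)) hP
  have hQpos : 0 < (a*m*(a*c+R))^2 - (S*(a*R+c*(a^2-1)))^2 := by
    rw [hQ]; nlinarith [h5, sq_nonneg (c*(a^2-1)+a*R)]
  have hK : 0 < a*c + R := by
    by_contra h
    push_neg at h
    have h1 : 0 ≤ a*c := by nlinarith
    have h2 : a*c ≤ -R := by linarith
    have h3 : (a*c)^2 ≤ (-R)^2 := by nlinarith
    nlinarith [h3, hsq, sq_nonneg m]
  have hA : 0 < a*m*(a*c+R) := by positivity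
  exact absT _ _ hA hQpos

theorem imKSp (u : ℂ) (x y s : ℝ) :
    (u * ((x:ℂ) + (y:ℂ) + Complex.I*(s:ℂ))).im = u.im*(x+y) + u.re*s := by
  simp [Complex.mul_im, Complex.add_re, Complex.add_im, Complex.mul_re]
  ring

theorem imKSm (u : ℂ) (x y s : ℝ) :
    (u * ((x:ℂ) + (y:ℂ) - Complex.I*(s:ℂ))).im = u.im*(x+y) - u.re*s := by
  simp [Complex.mul_im, Complex.sub_im, Complex.sub_re, Complex.add_re, Complex.add_im, Complex.mul_re]
  ring

set_option maxHeartbeats 1000000 in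
/-- The fixed directions `z_±` of the parallelogram holonomy lie strictly on
one side of the direction of `−b`: `Im(−z_± · conj b) > 0`. -/
theorem fixed_points_inside_angle
    (a c : ℝ) (ha : 0 < a) (hc : 0 < c) (b d : ℂ)
    (hab : a ^ 2 - ‖b‖ ^ 2 = 1)
    (hcd : c ^ 2 - ‖d‖ ^ 2 = 1)
    (m : ℝ) (hm : m = Complex.im ((starRingEnd ℂ) b * d)) (hm1 : 1 < m)
    (zp zm : ℂ)
    (hzp : zp = -((a : ℂ) * d + b * (c : ℂ))
        * (((a * c : ℝ) : ℂ) + (((Complex.re ((starRingEnd ℂ) b * d)) : ℝ) : ℂ)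
            + Complex.I * ((Real.sqrt (m ^ 2 - 1) : ℝ) : ℂ))
        / ((‖(a : ℂ) * d + b * (c : ℂ)‖ : ℝ) : ℂ) ^ 2)
    (hzm : zm = -((a : ℂ) * d + b * (c : ℂ))
        * (((a * c : ℝ) : ℂ) + (((Complex.re ((starRingEnd ℂ) b * d)) : ℝ) : ℂ)
            - Complex.I * ((Real.sqrt (m ^ 2 - 1) : ℝ) : ℂ))
        / ((‖(a : ℂ) * d + b * (c : ℂ)‖ : ℝ) : ℂ) ^ 2) :
    0 < Complex.im (-zp * (starRingEnd ℂ) b) ∧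
    0 < Complex.im (-zm * (starRingEnd ℂ) b) := by
  set w : ℂ := (a : ℂ) * d + b * (c : ℂ) with hw
  set R : ℝ := ((starRingEnd ℂ) b * d).re with hR
  set S : ℝ := Real.sqrt (m ^ 2 - 1) with hSdef
  have ha1 : 1 ≤ a := by nlinarith [norm_nonneg b, sq_nonneg ‖b‖]
  have hc1 : 1 ≤ c := by nlinarith [norm_nonneg d, sq_nonneg ‖d‖]
  have hS2 : S ^ 2 = m ^ 2 - 1 := Real.sq_sqrt (by nlinarith)
  have hb2 : b.re * b.re + b.im * b.im = a ^ 2 - 1 := by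
    have h := Complex.sq_norm b
    rw [Complex.normSq_apply] at h
    linarith
  have hd2 : d.re * d.re + d.im * d.im = c ^ 2 - 1 := by
    have h := Complex.sq_norm d
    rw [Complex.normSq_apply] at h
    linarith
  have hmco : m = b.re * d.im - b.im * d.re := by
    rw [hm]; simp [Complex.mul_im]; try ring
  have hRco : R = b.re * d.re + b.im * d.im := by
    rw [hR]; simp [Complex.mul_re]; try ring
  have hsq : R ^ 2 + m ^ 2 = (a ^ 2 - 1) * (c ^ 2 - 1) := by
    rw [hmco, hRco, ← hb2, ← hd2]; ring
  have him : (w * (starRingEnd ℂ) b).im = a * m := by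
    rw [hmco, hw]
    simp [Complex.mul_im, Complex.mul_re, Complex.add_im, Complex.add_re]
    ring
  have hre : (w * (starRingEnd ℂ) b).re = a * R + c * (a ^ 2 - 1) := by
    rw [hRco, ← hb2, hw]
    simp [Complex.mul_im, Complex.mul_re, Complex.add_im, Complex.add_re]
    ring
  have hwne : w ≠ 0 := by
    intro h
    rw [h] at him
    simp at him
    rcases him with h' | h' <;> nlinarith
  set N : ℝ := ‖w‖ ^ 2 with hN
  have hNpos : 0 < N := by
    rw [hN]
    exact pow_pos (norm_pos_iff.mpr hwne) 2
  have hcore := core a c m R S ha1 hc1 hm1 hsq hS2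
  constructor
  · have e1 : -zp * (starRingEnd ℂ) b
        = (w * (starRingEnd ℂ) b) * (((a*c : ℝ) : ℂ) + ((R : ℝ) : ℂ) + Complex.I * ((S : ℝ) : ℂ))
          / ((N : ℝ) : ℂ) := by
      rw [hzp, hN]
      push_cast
      ring
    rw [e1, Complex.div_ofReal_im, imKSp]
    apply div_pos _ hNpos
    rw [him, hre]
    have := hcore.1
    nlinarith [hcore.1]
  · have e1 : -zm * (starRingEnd ℂ) b
        = (w * (starRingEnd ℂ) b) * (((a*c : ℝ) : ℂ) + ((R : ℝ) : ℂ) - Complex.I * ((S : ℝ) : ℂ))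
          / ((N : ℝ) : ℂ) := by
      rw [hzm, hN]
      push_cast
      ring
    rw [e1, Complex.div_ofReal_im, imKSm]
    apply div_pos _ hNpos
    rw [him, hre]
    nlinarith [hcore.2]
end

section
/- Let a, c be positive reals and b, d ∈ ℂ with a² − |b|² = 1 and c² − |d|² = 1. Set M_X = [[a, b], [conj(b), a]], M_Y = [[c, d], [conj(d), c]], M_X⁻¹ = [[a, −b], [−conj(b), a]], M_Y⁻¹ = [[c, −d], [−conj(d), c]]. Then trace(M_X · M_Y · M_X⁻¹ · M_Y⁻¹ · M_Y⁻¹ · M_X⁻¹ · M_Y · M_X) = 2 + 16·(Im(conj(b)·d))²·|ad + bc|². In particular, if Im(conj(b)·d) ≠ 0 and ad + bc ≠ 0, this trace is strictly greater than 2, so the corresponding Möbius transformation has two fixed points on the unit circle. -/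
open Matrix

/-- Trace of the figure-eight holonomy `e^{X}e^{Y}e^{−X}e^{−2Y}e^{−X}e^{Y}e^{X}`:
`tr = 2 + 16 Im(conj b · d)² |ad+bc|²`, which exceeds 2 whenever
`Im(conj b · d) ≠ 0` and `ad + bc ≠ 0`. -/
theorem figure_eight_holonomy_trace
    (a c : ℝ) (ha : 0 < a) (hc : 0 < c) (b d : ℂ)
    (hab : a ^ 2 - ‖b‖ ^ 2 = 1)
    (hcd : c ^ 2 - ‖d‖ ^ 2 = 1)
    (MX MY MXinv MYinv : Matrix (Fin 2) (Fin 2) ℂ)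
    (hMX : MX = !![(a : ℂ), b; (starRingEnd ℂ) b, (a : ℂ)])
    (hMY : MY = !![(c : ℂ), d; (starRingEnd ℂ) d, (c : ℂ)])
    (hMXinv : MXinv = !![(a : ℂ), -b; -(starRingEnd ℂ) b, (a : ℂ)])
    (hMYinv : MYinv = !![(c : ℂ), -d; -(starRingEnd ℂ) d, (c : ℂ)]) :
    (MX * MY * MXinv * MYinv * MYinv * MXinv * MY * MX).trace
      = (((2 + 16 * (Complex.im ((starRingEnd ℂ) b * d)) ^ 2
            * ‖(a : ℂ) * d + b * (c : ℂ)‖ ^ 2 : ℝ)) : ℂ) ∧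
    (Complex.im ((starRingEnd ℂ) b * d) ≠ 0 → (a : ℂ) * d + b * (c : ℂ) ≠ 0 →
      (2 : ℝ) < 2 + 16 * (Complex.im ((starRingEnd ℂ) b * d)) ^ 2
            * ‖(a : ℂ) * d + b * (c : ℂ)‖ ^ 2) := by
  subst hMX hMY hMXinv hMYinv
  constructor
  · set B := (starRingEnd ℂ) b with hB
    set D := (starRingEnd ℂ) d with hD
    have h1 : (a : ℂ) ^ 2 - b * B = 1 := by
      rw [hB]
      have : (b * (starRingEnd ℂ) b : ℂ) = ((‖b‖ ^ 2 : ℝ) : ℂ) := by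
        rw [Complex.mul_conj, Complex.sq_norm]
      rw [this]
      push_cast
      exact_mod_cast congrArg (Complex.ofReal) hab
    have h2 : (c : ℂ) ^ 2 - d * D = 1 := by
      rw [hD]
      have : (d * (starRingEnd ℂ) d : ℂ) = ((‖d‖ ^ 2 : ℝ) : ℂ) := by
        rw [Complex.mul_conj, Complex.sq_norm]
      rw [this]
      exact_mod_cast congrArg (Complex.ofReal) hcd
    set t : ℝ := Complex.im (B * d) with ht
    set s : ℝ := ‖(a : ℂ) * d + b * (c : ℂ)‖ with hs
    -- imaginary part identity
    have him : ((t : ℝ) : ℂ) * Complex.I * 2 = B * d - b * D := by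
      have hconj : (starRingEnd ℂ) (B * d) = b * D := by
        rw [hB, hD, _root_.map_mul, Complex.conj_conj]
      have h := Complex.sub_conj (B * d)
      rw [hconj] at h
      push_cast at h
      rw [ht]
      linear_combination -h
    -- abs identity
    have habs : ((s : ℝ) : ℂ) ^ 2 = ((a : ℂ) * d + b * c) * ((a : ℂ) * D + B * c) := by
      have h : ((Complex.normSq ((a : ℂ) * d + b * (c : ℂ)) : ℝ) : ℂ)
          = ((a : ℂ) * d + b * c) * ((a : ℂ) * D + B * c) := by
        rw [← Complex.mul_conj, map_add, _root_.map_mul, _root_.map_mul, Complex.conj_ofReal,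
          Complex.conj_ofReal, ← hB, ← hD]
      rw [← h, ← Complex.sq_norm, hs]
      push_cast
      ring
    have hI : (Complex.I : ℂ) ^ 2 = -1 := Complex.I_sq
    simp only [Matrix.trace_fin_two, Matrix.mul_fin_two, Matrix.cons_val', Matrix.cons_val_zero,
      Matrix.cons_val_one, Matrix.head_cons, Matrix.empty_val', Matrix.cons_val_fin_one,
      Matrix.head_fin_const, Matrix.of_apply]
    push_cast
    rw [habs]
    linear_combination (2*d^2*D^2 - 2*b*B*d^2*D^2 - 4*(c:ℂ)^2*d*D + 4*(c:ℂ)^2*b*B*d*D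
        + 2*(c:ℂ)^4 - 2*(c:ℂ)^4*b*B + 2*(a:ℂ)^2*d^2*D^2 - 4*(a:ℂ)^2*(c:ℂ)^2*d*D
        + 2*(a:ℂ)^2*(c:ℂ)^4) * h1
      + (2 - 2*d*D + 2*(c:ℂ)^2) * h2
      + 4*((B*d - b*D) + (t:ℂ)*Complex.I*2) * (((a:ℂ)*d + b*c) * ((a:ℂ)*D + B*c)) * him
      + (-16*(t:ℂ)^2 * (((a:ℂ)*d + b*c) * ((a:ℂ)*D + B*c))) * hI
  · intro h1 h2
    have h3 : ‖(a : ℂ) * d + b * (c : ℂ)‖ ≠ 0 := by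
      simpa using h2
    have t1 := pow_two_pos_of_ne_zero h1
    have t2 := pow_two_pos_of_ne_zero h3
    nlinarith
end
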